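/- arXiv:1408.3499 — 7 statements merged into one kernel-verified Lean document; each statement's English description precedes it below -/
import Mathlib

section
/- Let δ, λ, σ > 0 and let c : [0,∞) → ℝ be measurable with 0 ≤ c(t) ≤ μ₂ for all t, where 4δ²λ^{4σ-2} ≥ μ₂. Let u be a solution of u'' + 2δλ^{2σ}u' + λ²c(t)u = 0 with u(0)=u₀, u'(0)=u₁. Then the energy E(t) = (u'(t)+δλ^{2σ}u(t))² + δ²λ^{4σ}u(t)² is nonincreasing, and consequently |u(t)|² ≤ (2/(δ²λ^{4σ}))u₁² + 3u₀² for all t ≥ 0. -/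
open Real MeasureTheory

lemma key_quad (a b x y : ℝ) (ha : 0 < a) (hb : 0 ≤ b) (hba : b ≤ 4 * a ^ 2) :
    0 ≤ a * x ^ 2 + b * x * y + a * b * y ^ 2 := by
  nlinarith [sq_nonneg (2 * a * x + b * y),
    mul_nonneg (mul_nonneg hb (sub_nonneg.mpr hba)) (sq_nonneg y)]

theorem stmt1 (δ l σ μ₂ : ℝ) (hδ : 0 < δ) (hl : 0 < l) (hσ : 0 < σ)
    (c : ℝ → ℝ) (hc_meas : Measurable c)
    (hc : ∀ t ≥ (0:ℝ), 0 ≤ c t ∧ c t ≤ μ₂)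
    (hmain : 4 * δ ^ 2 * l ^ (4*σ - 2) ≥ μ₂)
    (u u' u'' : ℝ → ℝ)
    (hu : ∀ t, HasDerivAt u (u' t) t) (hu' : ∀ t, HasDerivAt u' (u'' t) t)
    (hode : ∀ t ≥ (0:ℝ), u'' t + 2 * δ * l ^ (2*σ) * u' t + l ^ 2 * c t * u t = 0)
    (u₀ u₁ : ℝ) (h0 : u 0 = u₀) (h1 : u' 0 = u₁)
    (E : ℝ → ℝ)
    (hE : ∀ t, E t = (u' t + δ * l ^ (2*σ) * u t) ^ 2 + δ ^ 2 * l ^ (4*σ) * (u t) ^ 2) :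
    AntitoneOn E (Set.Ici 0) ∧
    ∀ t ≥ (0:ℝ), (u t) ^ 2 ≤ 2 / (δ ^ 2 * l ^ (4*σ)) * u₁ ^ 2 + 3 * u₀ ^ 2 := by
  have hlp : (0:ℝ) < l ^ (2*σ) := Real.rpow_pos_of_pos hl _
  set a : ℝ := δ * l ^ (2*σ) with ha_def
  have ha : 0 < a := mul_pos hδ hlp
  have hl2 : ((l ^ (2*σ)) : ℝ) ^ (2:ℕ) = l ^ (4*σ) := by
    rw [← Real.rpow_natCast (l ^ (2*σ)) 2, ← Real.rpow_mul hl.le]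
    norm_num
    congr 1
    ring
  have hsq : a ^ 2 = δ ^ 2 * l ^ (4*σ) := by
    rw [ha_def, mul_pow, hl2]
  have hl42 : l ^ (4*σ - 2) * l ^ 2 = l ^ (4*σ) := by
    rw [← Real.rpow_natCast l 2, ← Real.rpow_add hl]
    congr 1
    ring
  -- rewrite E
  have hEfun : E = fun t => (u' t + a * u t) ^ 2 + a ^ 2 * (u t) ^ 2 := by
    funext t; rw [hE t, hsq]
  -- derivative of E
  have hEderiv : ∀ t, HasDerivAt E
      (2 * (u' t + a * u t) * (u'' t + a * u' t) + a ^ 2 * (2 * u t * u' t)) t := by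
    intro t
    rw [hEfun]
    have h1 : HasDerivAt (fun t => (u' t + a * u t) ^ 2)
        (2 * (u' t + a * u t) ^ 1 * (u'' t + a * u' t)) t :=
      ((hu' t).add ((hu t).const_mul a)).pow 2
    have h2 : HasDerivAt (fun t => a ^ 2 * (u t) ^ 2)
        (a ^ 2 * (2 * (u t) ^ 1 * u' t)) t :=
      (((hu t).pow 2)).const_mul (a ^ 2)
    have := h1.add h2
    exact this.congr_deriv (by ring)
  -- deriv nonpositive on interior
  have hderiv_nonpos : ∀ t ∈ interior (Set.Ici (0:ℝ)), deriv E t ≤ 0 := by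
    intro t ht
    rw [interior_Ici] at ht
    have ht0 : (0:ℝ) ≤ t := le_of_lt ht
    rw [(hEderiv t).deriv]
    have hode' := hode t ht0
    have hu''eq : u'' t = -(2 * a * u' t + l ^ 2 * c t * u t) := by
      rw [ha_def]; linarith [hode']
    rw [hu''eq]
    have hb0 : 0 ≤ l ^ 2 * c t := mul_nonneg (by positivity) (hc t ht0).1
    have hba : l ^ 2 * c t ≤ 4 * a ^ 2 := by
      have h1 : c t ≤ μ₂ := (hc t ht0).2
      have h2 : l ^ 2 * c t ≤ l ^ 2 * (4 * δ ^ 2 * l ^ (4*σ - 2)) := by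
        apply mul_le_mul_of_nonneg_left (le_trans h1 hmain) (by positivity)
      calc l ^ 2 * c t ≤ l ^ 2 * (4 * δ ^ 2 * l ^ (4*σ - 2)) := h2
        _ = 4 * δ ^ 2 * (l ^ (4*σ - 2) * l ^ 2) := by ring
        _ = 4 * a ^ 2 := by rw [hl42, hsq]; ring
    have key := key_quad a (l ^ 2 * c t) (u' t) (u t) ha hb0 hba
    nlinarith [key]
  -- antitone
  have hanti : AntitoneOn E (Set.Ici 0) := by
    apply antitoneOn_of_deriv_nonpos (convex_Ici 0)
    · exact fun t _ => (hEderiv t).continuousAt.continuousWithinAt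
    · exact fun t _ => (hEderiv t).differentiableAt.differentiableWithinAt
    · exact hderiv_nonpos
  refine ⟨hanti, fun t ht => ?_⟩
  have hEt : E t ≤ E 0 := hanti (Set.self_mem_Ici) ht ht
  have hE0 : E 0 = (u₁ + a * u₀) ^ 2 + a ^ 2 * u₀ ^ 2 := by
    rw [hEfun]; simp [h0, h1]
  have hlow : a ^ 2 * (u t) ^ 2 ≤ E t := by
    rw [hE t, ← hsq]; nlinarith [sq_nonneg (u' t + a * u t)]
  have hkey : a ^ 2 * (u t) ^ 2 ≤ 2 * u₁ ^ 2 + 3 * a ^ 2 * u₀ ^ 2 := by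
    have : (u₁ + a * u₀) ^ 2 ≤ 2 * u₁ ^ 2 + 2 * (a * u₀) ^ 2 := by
      nlinarith [sq_nonneg (u₁ - a * u₀)]
    nlinarith [hEt, hE0, hlow]
  have ha2 : 0 < a ^ 2 := by positivity
  rw [← hsq]
  rw [show 2 / a ^ 2 * u₁ ^ 2 + 3 * u₀ ^ 2
      = (2 * u₁ ^ 2 + 3 * a ^ 2 * u₀ ^ 2) / a ^ 2 by field_simp,
    le_div_iff₀ ha2]
  nlinarith [hkey]
end

section
/- Under the hypotheses of the previous degenerate hyperbolic estimate (0 ≤ c(t) ≤ μ₂ measurable, 4δ²λ^{4σ-2} ≥ μ₂, δ, λ, σ > 0), the derivative of the solution u of u'' + 2δλ^{2σ}u' + λ²c(t)u = 0 satisfies |u'(t)|² ≤ (2 + μ₂²/(δ⁴λ^{8σ-4}))u₁² + (3μ₂²/(2δ²λ^{4σ-4}))u₀² for all t ≥ 0. -/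
open Real MeasureTheory

set_option maxHeartbeats 2000000 in
theorem stmt2 (δ l σ μ₂ : ℝ) (hδ : 0 < δ) (hl : 0 < l) (hσ : 0 < σ)
    (c : ℝ → ℝ) (hc_meas : Measurable c)
    (hc : ∀ t ≥ (0:ℝ), 0 ≤ c t ∧ c t ≤ μ₂)
    (hmain : 4 * δ ^ 2 * l ^ (4*σ - 2) ≥ μ₂)
    (u u' u'' : ℝ → ℝ)
    (hu : ∀ t, HasDerivAt u (u' t) t) (hu' : ∀ t, HasDerivAt u' (u'' t) t)
    (hode : ∀ t ≥ (0:ℝ), u'' t + 2 * δ * l ^ (2*σ) * u' t + l ^ 2 * c t * u t = 0)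
    (u₀ u₁ : ℝ) (h0 : u 0 = u₀) (h1 : u' 0 = u₁) :
    ∀ t ≥ (0:ℝ),
      (u' t) ^ 2 ≤ (2 + μ₂ ^ 2 / (δ ^ 4 * l ^ (8*σ - 4))) * u₁ ^ 2
        + (3 * μ₂ ^ 2 / (2 * δ ^ 2 * l ^ (4*σ - 4))) * u₀ ^ 2 := by
  have hμ₂ : 0 ≤ μ₂ := le_trans (hc 0 le_rfl).1 (hc 0 le_rfl).2
  set k : ℝ := 2 * δ * l ^ (2*σ) with hk_def
  have hP : (0:ℝ) < l ^ (2*σ) := Real.rpow_pos_of_pos hl _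
  have hk : 0 < k := by rw [hk_def]; positivity
  have hu_cont : Continuous u := by
    exact continuous_iff_continuousAt.2 fun x => (hu x).differentiableAt.continuousAt
  have hu'_cont : Continuous u' := by
    exact continuous_iff_continuousAt.2 fun x => (hu' x).differentiableAt.continuousAt
  -- l^2 μ₂ ≤ k^2
  have hkk : k^2 = 4 * δ^2 * (l ^ (2*σ))^2 := by rw [hk_def]; ring
  have hl4 : (l ^ (2*σ))^2 = l ^ (4*σ - 2) * l^2 := by
    rw [← Real.rpow_natCast (l ^ (2*σ)) 2, ← Real.rpow_natCast l 2,
      ← Real.rpow_mul hl.le, ← Real.rpow_add hl]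
    norm_num
    ring_nf
  have hγk : l^2 * μ₂ ≤ k^2 := by
    rw [hkk, hl4]
    have h2 : (0:ℝ) ≤ l^2 := sq_nonneg l
    nlinarith [hmain]
  -- Step A: bound on u
  set H : ℝ → ℝ := fun s => k^2*(u s*u s) + 2*k*(u s*u' s) + 2*(u' s*u' s) with hH_def
  have hH_deriv : ∀ s, HasDerivAt H
      (k^2*(u' s*u s + u s*u' s) + 2*k*(u' s*u' s + u s*u'' s)
        + 2*(u'' s*u' s + u' s*u'' s)) s := fun s =>
    ((((hu s).mul (hu s)).const_mul (k^2)).add (((hu s).mul (hu' s)).const_mul (2*k))).add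
      (((hu' s).mul (hu' s)).const_mul 2)
  have hH_anti : AntitoneOn H (Set.Ici (0:ℝ)) := by
    apply antitoneOn_of_deriv_nonpos (convex_Ici 0)
    · exact Continuous.continuousOn (by continuity)
    · intro x _; exact (hH_deriv x).differentiableAt.differentiableWithinAt
    · intro x hx
      rw [interior_Ici] at hx
      rw [(hH_deriv x).deriv]
      have hode' := hode x hx.le
      have hcx := hc x hx.le
      have hu'' : u'' x = -(k * u' x + l^2 * c x * u x) := by linarith
      have hγ0 : 0 ≤ l^2 * c x := mul_nonneg (sq_nonneg l) hcx.1
      have hγle : l^2 * c x ≤ k^2 :=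
        le_trans (by nlinarith [sq_nonneg l, hcx.2] : l^2 * c x ≤ l^2 * μ₂) hγk
      have hD : k^2*(u' x*u x + u x*u' x) + 2*k*(u' x*u' x + u x*u'' x)
          + 2*(u'' x*u' x + u' x*u'' x)
          = -(2*k*(u' x)^2 + 2*k*(l^2*c x)*(u x)^2 + 4*(l^2*c x)*(u x*u' x)) := by
        rw [hu'']; ring
      rw [hD, neg_nonpos]
      nlinarith [sq_nonneg (k * u' x + l^2 * c x * u x),
        mul_nonneg (mul_nonneg hγ0 (sub_nonneg.2 hγle)) (sq_nonneg (u x)), hk]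
  have hM : ∀ s ≥ (0:ℝ), (u s)^2 ≤ 3*u₀^2 + 8*u₁^2/k^2 := by
    intro s hs
    have h1' : H s ≤ H 0 := hH_anti Set.self_mem_Ici hs hs
    have h2 : k^2*(u s)^2 ≤ 2*H s := by
      simp only [hH_def]; nlinarith [sq_nonneg (k*u s + 2*u' s)]
    have h3 : 2*H 0 ≤ 3*k^2*u₀^2 + 8*u₁^2 := by
      simp only [hH_def, h0, h1]; nlinarith [sq_nonneg (k*u₀ - 2*u₁)]
    have hk2 : (0:ℝ) < k^2 := by positivity
    have h5 : (u s)^2 - 3*u₀^2 ≤ 8*u₁^2/k^2 := by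
      rw [le_div_iff₀ hk2]; nlinarith
    linarith
  have hM2 : (0:ℝ) ≤ 3*u₀^2 + 8*u₁^2/k^2 := by positivity
  set B : ℝ := Real.sqrt (3*u₀^2 + 8*u₁^2/k^2) with hB_def
  have hB0 : 0 ≤ B := Real.sqrt_nonneg _
  have hB2 : B^2 = 3*u₀^2 + 8*u₁^2/k^2 := Real.sq_sqrt hM2
  have hBu : ∀ s ≥ (0:ℝ), |u s| ≤ B := by
    intro s hs
    rw [← Real.sqrt_sq_eq_abs]
    exact Real.sqrt_le_sqrt (hM s hs)
  -- Step B : representation of u'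
  intro t ht
  set g : ℝ → ℝ := fun s => -(l^2 * c s * u s * Real.exp (k*s)) with hg_def
  have hg_meas : Measurable g := by
    exact (((measurable_const.mul hc_meas).mul hu_cont.measurable).mul
      (by fun_prop : Measurable fun s => Real.exp (k*s))).neg
  set φ : ℝ → ℝ := fun s => l^2 * μ₂ * B * Real.exp (k*s) with hφ_def
  have hφ_cont : Continuous φ := by fun_prop
  have hg_bound : ∀ s ∈ Set.Icc (0:ℝ) t, |g s| ≤ φ s := by
    intro s hs
    have hcs := hc s hs.1
    have habs : |g s| = l^2 * c s * |u s| * Real.exp (k*s) := by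
      rw [hg_def]
      rw [abs_neg, abs_mul, abs_mul, abs_mul, abs_of_nonneg (Real.exp_pos _).le,
        abs_of_nonneg (sq_nonneg l), abs_of_nonneg hcs.1]
    rw [habs]
    have hb := hBu s hs.1
    have h2 : (0:ℝ) ≤ l^2 := sq_nonneg l
    show _ ≤ l^2 * μ₂ * B * Real.exp (k*s)
    have hinner : l^2 * c s * |u s| ≤ l^2 * μ₂ * B := by
      nlinarith [mul_nonneg h2 (mul_nonneg hμ₂ (sub_nonneg.2 hb)),
        mul_nonneg h2 (mul_nonneg (abs_nonneg (u s)) (sub_nonneg.2 hcs.2))]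
    exact mul_le_mul_of_nonneg_right hinner (Real.exp_pos _).le
  have hg_int : IntervalIntegrable g volume 0 t := by
    rw [intervalIntegrable_iff_integrableOn_Ioc_of_le ht]
    apply Integrable.mono' (g := fun s => φ s) hφ_cont.integrableOn_Ioc
      hg_meas.aestronglyMeasurable.restrict
    exact (ae_restrict_iff' measurableSet_Ioc).2 (ae_of_all _ fun s hs =>
        hg_bound s ⟨hs.1.le, hs.2⟩)
  -- FTC representation
  set F : ℝ → ℝ := fun s => Real.exp (k*s) * u' s with hF_def
  have hexp : ∀ s : ℝ, HasDerivAt (fun y => Real.exp (k*y)) (Real.exp (k*s) * k) s := by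
    intro s
    convert ((hasDerivAt_id' s).const_mul k).exp using 1; ring
  have hFd : ∀ s ∈ Set.uIcc (0:ℝ) t, HasDerivAt F (g s) s := by
    intro s hs
    rw [Set.uIcc_of_le ht] at hs
    have hode' := hode s hs.1
    have hmul := (hexp s).mul (hu' s)
    refine hmul.congr_deriv ?_
    simp only [hg_def]
    linear_combination (Real.exp (k*s)) * hode'
  have hFTC : ∫ s in (0:ℝ)..t, g s = Real.exp (k*t) * u' t - u₁ := by
    rw [intervalIntegral.integral_eq_sub_of_hasDerivAt hFd hg_int]
    simp [hF_def, h1]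
  have hφ_int : IntervalIntegrable φ volume 0 t := hφ_cont.intervalIntegrable 0 t
  have hIb : |∫ s in (0:ℝ)..t, g s| ≤ |∫ s in (0:ℝ)..t, φ s| := by
    have := intervalIntegral.norm_integral_le_abs_of_norm_le (μ := volume) (f := g)
      (a := 0) (b := t) ?_ hφ_int
    · simpa [Real.norm_eq_abs] using this
    · rw [Set.uIoc_of_le ht]
      exact (ae_restrict_iff' measurableSet_Ioc).2 (ae_of_all _ fun s hs =>
        le_trans (le_of_eq (Real.norm_eq_abs _)) (hg_bound s ⟨hs.1.le, hs.2⟩))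
  have hψ : ∀ s : ℝ, HasDerivAt (fun y => l^2*μ₂*B/k * Real.exp (k*y)) (φ s) s := by
    intro s
    have := (hexp s).const_mul (l^2*μ₂*B/k)
    refine this.congr_deriv ?_
    simp only [hφ_def]
    field_simp
  have hφ_val : ∫ s in (0:ℝ)..t, φ s
      = l^2*μ₂*B/k * Real.exp (k*t) - l^2*μ₂*B/k := by
    rw [intervalIntegral.integral_eq_sub_of_hasDerivAt (fun s _ => hψ s) hφ_int]
    simp
  have hE1 : (1:ℝ) ≤ Real.exp (k*t) := by
    rw [← Real.exp_zero]
    exact Real.exp_le_exp.2 (by positivity)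
  have hD0 : 0 ≤ l^2*μ₂*B/k := by positivity
  have h6 : |Real.exp (k*t) * u' t - u₁| ≤ l^2*μ₂*B/k * Real.exp (k*t) - l^2*μ₂*B/k := by
    rw [← hFTC]
    refine le_trans hIb ?_
    rw [hφ_val]
    rw [abs_of_nonneg (by nlinarith)]
  have h7 : Real.exp (k*t) * |u' t| ≤ |u₁| + l^2*μ₂*B/k * Real.exp (k*t) := by
    have htri := abs_sub_abs_le_abs_sub (Real.exp (k*t) * u' t) u₁
    rw [abs_mul, abs_of_nonneg (Real.exp_pos _).le] at htri
    nlinarith [hD0]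
  have habs' : |u' t| ≤ |u₁| + l^2*μ₂*B/k := by
    nlinarith [abs_nonneg u₁, abs_nonneg (u' t), hE1, Real.exp_pos (k*t), h7,
      mul_nonneg (abs_nonneg u₁) (sub_nonneg.2 hE1)]
  have hfin : (u' t)^2 ≤ 2*u₁^2 + 2*(l^2*μ₂*B/k)^2 := by
    nlinarith [habs', sq_abs (u' t), sq_abs u₁, sq_nonneg (|u₁| - l^2*μ₂*B/k),
      abs_nonneg u₁, abs_nonneg (u' t), hD0]
  have e1 : l ^ (8*σ - 4) = (l ^ (2*σ))^4 / l^4 := by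
    rw [show (8*σ - 4 : ℝ) = 2*σ*4 - 4 by ring, Real.rpow_sub hl, Real.rpow_mul hl.le,
      show ((4:ℝ)) = ((4:ℕ):ℝ) by norm_num, Real.rpow_natCast, Real.rpow_natCast]
  have e2 : l ^ (4*σ - 4) = (l ^ (2*σ))^2 / l^4 := by
    rw [show (4*σ - 4 : ℝ) = 2*σ*2 - 4 by ring, Real.rpow_sub hl, Real.rpow_mul hl.le,
      show ((2:ℝ)) = ((2:ℕ):ℝ) by norm_num]
    rw [show ((4:ℝ)) = ((4:ℕ):ℝ) by norm_num, Real.rpow_natCast, Real.rpow_natCast]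
  calc (u' t)^2 ≤ 2*u₁^2 + 2*(l^2*μ₂*B/k)^2 := hfin
    _ = (2 + μ₂ ^ 2 / (δ ^ 4 * l ^ (8*σ - 4))) * u₁ ^ 2
        + (3 * μ₂ ^ 2 / (2 * δ ^ 2 * l ^ (4*σ - 4))) * u₀ ^ 2 := by
      have hsq : (l^2*μ₂*B/k)^2 = (l^2*μ₂/k)^2 * B^2 := by ring
      rw [hsq, hB2, e1, e2, hk_def]
      have hδ' : δ ≠ 0 := hδ.ne'
      have hl' : l ≠ 0 := hl.ne'
      have hP' : l ^ (2*σ) ≠ 0 := hP.ne'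
      field_simp
      ring
end

section
/- Let λ ≥ 1, σ ≥ 1/2, and let α, β be real numbers with 1−σ ≤ α−β ≤ σ. Assume 0 ≤ c(t) ≤ μ₂ and 4δ²λ^{4σ-2} ≥ μ₂ with δ > 0. Then the solution u of u'' + 2δλ^{2σ}u' + λ²c(t)u = 0 satisfies λ^{4β}|u'(t)|² + λ^{4α}|u(t)|² ≤ (2 + 2/δ² + μ₂²/δ⁴) λ^{4β}u₁² + 3(1 + μ₂²/(2δ²)) λ^{4α}u₀² for all t ≥ 0. -/
open Real MeasureTheory

private lemma sq_add_le_aux (x y : ℝ) : (x + y)^2 ≤ 2*x^2 + 2*y^2 := by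
  nlinarith [sq_nonneg (x - y)]

set_option maxHeartbeats 2000000 in
theorem stmt4 (δ l σ μ₂ α β : ℝ) (hδ : 0 < δ) (hl : 1 ≤ l) (hσ : 1/2 ≤ σ)
    (hαβ : 1 - σ ≤ α - β ∧ α - β ≤ σ)
    (c : ℝ → ℝ) (hc_meas : Measurable c)
    (hc : ∀ t ≥ (0:ℝ), 0 ≤ c t ∧ c t ≤ μ₂)
    (hmain : 4 * δ ^ 2 * l ^ (4*σ - 2) ≥ μ₂)
    (u u' u'' : ℝ → ℝ)
    (hu : ∀ t, HasDerivAt u (u' t) t) (hu' : ∀ t, HasDerivAt u' (u'' t) t)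
    (hode : ∀ t ≥ (0:ℝ), u'' t + 2 * δ * l ^ (2*σ) * u' t + l ^ 2 * c t * u t = 0)
    (u₀ u₁ : ℝ) (h0 : u 0 = u₀) (h1 : u' 0 = u₁) :
    ∀ t ≥ (0:ℝ),
      l ^ (4*β) * (u' t) ^ 2 + l ^ (4*α) * (u t) ^ 2 ≤
        (2 + 2 / δ ^ 2 + μ₂ ^ 2 / δ ^ 4) * l ^ (4*β) * u₁ ^ 2
        + 3 * (1 + μ₂ ^ 2 / (2 * δ ^ 2)) * l ^ (4*α) * u₀ ^ 2 := by
  have hl0 : (0:ℝ) < l := lt_of_lt_of_le one_pos hl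
  have hμ₂ : 0 ≤ μ₂ := le_trans (hc 0 le_rfl).1 (hc 0 le_rfl).2
  set B : ℝ := l ^ (4*β) with hB_def
  set A : ℝ := l ^ (4*α) with hA_def
  have hB : 0 < B := Real.rpow_pos_of_pos hl0 _
  have hA : 0 < A := Real.rpow_pos_of_pos hl0 _
  clear_value B A
  set S : ℝ := l ^ (4*σ) with hS_def
  have hS : 0 < S := Real.rpow_pos_of_pos hl0 _
  clear_value S
  set a : ℝ := δ * l ^ (2*σ) with ha_def
  have hl2σ : 0 < l ^ (2*σ) := Real.rpow_pos_of_pos hl0 _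
  have ha : 0 < a := mul_pos hδ hl2σ
  clear_value a
  have hcast2 : (l:ℝ)^(2:ℕ) = l ^ ((2:ℝ)) := by
    rw [show ((2:ℝ)) = ((2:ℕ):ℝ) by norm_num, Real.rpow_natCast]
  have hl4 : (((l:ℝ)^2)^2 : ℝ) = l ^ ((4:ℝ)) := by
    rw [show ((4:ℝ)) = ((4:ℕ):ℝ) by norm_num, Real.rpow_natCast]; ring
  have ha2 : a^2 = δ^2 * S := by
    rw [ha_def, mul_pow, ← Real.rpow_natCast (l ^ (2*σ)) 2, ← Real.rpow_mul hl0.le,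
      show (2*σ)*((2:ℕ):ℝ) = 4*σ by push_cast; ring, hS_def]
  have hS2 : S^2 = l ^ (8*σ) := by
    rw [hS_def, ← Real.rpow_natCast (l ^ (4*σ)) 2, ← Real.rpow_mul hl0.le,
      show (4*σ)*((2:ℕ):ℝ) = 8*σ by push_cast; ring]
  -- overdamping : l^2 * μ₂ ≤ 4 a^2
  have hlμ : l^2 * μ₂ ≤ 4*a^2 := by
    have h1 : l^2 * μ₂ ≤ l^2 * (4*δ^2*l^(4*σ-2)) :=
      mul_le_mul_of_nonneg_left hmain (by positivity)
    have h2 : l^2 * (4*δ^2*l^(4*σ-2)) = 4*a^2 := by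
      rw [ha2, hS_def, hcast2,
        show l ^ ((2:ℝ)) * (4*δ^2*l^(4*σ-2)) = 4*δ^2*(l^((2:ℝ)) * l^(4*σ-2)) by ring,
        ← Real.rpow_add hl0, show (2:ℝ) + (4*σ-2) = 4*σ by ring]
      ring
    linarith
  -- exponent comparisons
  have hl4S : (l^2)^2 ≤ S^2 := by
    rw [hl4, hS2]
    exact Real.rpow_le_rpow_of_exponent_le hl (by linarith)
  have hAS : A ≤ B * S := by
    rw [hA_def, hB_def, hS_def, ← Real.rpow_add hl0]
    exact Real.rpow_le_rpow_of_exponent_le hl (by linarith [hαβ.2])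
  have hBS : B * (l^2)^2 ≤ A * S := by
    have h1 : B * (l^2)^2 = l ^ (4*β + 4) := by
      rw [hB_def, Real.rpow_add hl0, hl4]
    have h2 : A * S = l ^ (4*α + 4*σ) := by rw [hA_def, hS_def, Real.rpow_add hl0]
    rw [h1, h2]
    exact Real.rpow_le_rpow_of_exponent_le hl (by linarith [hαβ.1])
  -- rewritten ODE
  have hode' : ∀ x ≥ (0:ℝ), u'' x = -(2*a*u' x) - l^2*c x*u x := by
    intro x hx
    have h := hode x hx
    rw [ha_def]; linarith
  -- the energy functional
  set E : ℝ → ℝ := fun s => (u' s + a * u s)^2 + a^2 * (u s)^2 with hE_def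
  clear_value E
  have hE : ∀ s, HasDerivAt E
      (2*(u' s + a*u s)*(u'' s + a*u' s) + a^2*(2*(u s)*(u' s))) s := by
    intro s
    rw [hE_def]
    have h1 : HasDerivAt (fun x => (u' x + a*u x)^2)
        (2*(u' s + a*u s)*(u'' s + a*u' s)) s := by
      have := (((hu' s).fun_add ((hu s).const_mul a)).fun_pow 2)
      refine this.congr_deriv ?_
      push_cast; ring
    have h2 : HasDerivAt (fun x => a^2 * (u x)^2) (a^2*(2*(u s)*(u' s))) s := by
      have := ((hu s).pow 2).const_mul (a^2)
      refine this.congr_deriv ?_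
      push_cast; ring
    exact h1.add h2
  have hEanti : AntitoneOn E (Set.Ici 0) := by
    apply antitoneOn_of_deriv_nonpos (convex_Ici 0)
    · exact fun x _ => (hE x).continuousAt.continuousWithinAt
    · intro x _
      exact (hE x).differentiableAt.differentiableWithinAt
    · intro x hx
      rw [interior_Ici] at hx
      rw [(hE x).deriv]
      have h := hode' x (le_of_lt hx)
      set p := l^2 * c x with hp_def
      have hp0 : 0 ≤ p := mul_nonneg (by positivity) (hc x (le_of_lt hx)).1
      have hp4 : p ≤ 4*a^2 := by
        have h2 : l^2 * c x ≤ l^2 * μ₂ :=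
          mul_le_mul_of_nonneg_left (hc x (le_of_lt hx)).2 (by positivity)
        rw [hp_def]; linarith
      rw [h]
      nlinarith [sq_nonneg (2*a*(u' x) + p*(u x)),
        mul_nonneg (mul_nonneg hp0 (sub_nonneg.2 hp4)) (sq_nonneg (u x)), ha,
        sq_nonneg (u' x), sq_nonneg (u x)]
  have hE0 : ∀ s ≥ (0:ℝ), E s ≤ 2*u₁^2 + 3*a^2*u₀^2 := by
    intro s hs
    have hle : E s ≤ E 0 := hEanti (Set.self_mem_Ici) hs hs
    have h2 : E 0 = (u₁ + a*u₀)^2 + a^2*u₀^2 := by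
      simp only [hE_def]; rw [h0, h1]
    nlinarith [sq_nonneg (u₁ - a*u₀)]
  -- pointwise bound on u
  have hu2 : ∀ s ≥ (0:ℝ), a^2 * (u s)^2 ≤ 2*u₁^2 + 3*a^2*u₀^2 := by
    intro s hs
    have hh1 := hE0 s hs
    have hh2 : a^2*(u s)^2 ≤ E s := by
      simp only [hE_def]; nlinarith [sq_nonneg (u' s + a*u s)]
    linarith
  -- sup bound M on |u|
  set M : ℝ := Real.sqrt (2/a^2*u₁^2 + 3*u₀^2) with hM_def
  have hQ : (0:ℝ) ≤ 2/a^2*u₁^2 + 3*u₀^2 := by positivity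
  have hM2 : M^2 = 2/a^2*u₁^2 + 3*u₀^2 := Real.sq_sqrt hQ
  have hMnn : 0 ≤ M := Real.sqrt_nonneg _
  clear_value M
  have ha2pos : (0:ℝ) < a^2 := pow_pos ha 2
  have hMb : ∀ s ≥ (0:ℝ), |u s| ≤ M := by
    intro s hs
    have hd1 : (u s)^2 ≤ (2*u₁^2 + 3*a^2*u₀^2)/a^2 := by
      rw [le_div_iff₀ ha2pos]; nlinarith [hu2 s hs]
    have hd2 : (2*u₁^2 + 3*a^2*u₀^2)/a^2 = 2/a^2*u₁^2 + 3*u₀^2 := by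
      field_simp
    have hd3 : (u s)^2 ≤ M^2 := by rw [hM2]; linarith
    calc |u s| = Real.sqrt ((u s)^2) := (Real.sqrt_sq_eq_abs _).symm
      _ ≤ Real.sqrt (M^2) := Real.sqrt_le_sqrt hd3
      _ = M := by rw [Real.sqrt_sq hMnn]
  -- the constant K
  set K : ℝ := l^2*μ₂*M/(2*a) with hK_def
  have hK0 : 0 ≤ K := by
    rw [hK_def]
    apply div_nonneg _ (by linarith)
    exact mul_nonneg (mul_nonneg (by positivity) hμ₂) hMnn
  clear_value K
  have hforce : ∀ s ≥ (0:ℝ), |l^2*c s*u s| ≤ 2*a*K := by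
    intro s hs
    have hk1 : 2*a*K = l^2*μ₂*M := by
      rw [hK_def]; field_simp
    rw [hk1, abs_mul, abs_mul]
    have hc1 := hc s hs
    have hk2 : |c s| ≤ μ₂ := by rw [abs_of_nonneg hc1.1]; exact hc1.2
    have hk3 : |(l:ℝ)^2| = l^2 := abs_of_nonneg (by positivity)
    rw [hk3]
    calc l^2 * |c s| * |u s| ≤ l^2 * μ₂ * M := by
          apply mul_le_mul _ (hMb s hs) (abs_nonneg _)
            (mul_nonneg (by positivity) hμ₂)
          exact mul_le_mul_of_nonneg_left hk2 (by positivity)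
      _ = l^2*μ₂*M := by ring
  -- monotone auxiliary functions
  have hexp : ∀ s : ℝ, HasDerivAt (fun x => Real.exp (2*a*x))
      (Real.exp (2*a*s) * (2*a)) s := by
    intro s
    have h := ((hasDerivAt_id s).const_mul (2*a)).exp
    simpa using h
  have hgderiv : ∀ s, HasDerivAt (fun x => Real.exp (2*a*x) * (u' x - K))
      (Real.exp (2*a*s) * (2*a) * (u' s - K) + Real.exp (2*a*s) * u'' s) s := by
    intro s
    exact (hexp s).mul ((hu' s).sub_const K)
  have hhderiv : ∀ s, HasDerivAt (fun x => Real.exp (2*a*x) * (u' x + K))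
      (Real.exp (2*a*s) * (2*a) * (u' s + K) + Real.exp (2*a*s) * u'' s) s := by
    intro s
    exact (hexp s).mul ((hu' s).add_const K)
  have hganti : AntitoneOn (fun x => Real.exp (2*a*x) * (u' x - K)) (Set.Ici 0) := by
    apply antitoneOn_of_deriv_nonpos (convex_Ici 0)
    · exact fun x _ => (hgderiv x).continuousAt.continuousWithinAt
    · exact fun x _ => (hgderiv x).differentiableAt.differentiableWithinAt
    · intro x hx
      rw [interior_Ici] at hx
      rw [(hgderiv x).deriv]
      have h := hode' x (le_of_lt hx)
      have hf := hforce x (le_of_lt hx)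
      have h2 : -(l^2*c x*u x) ≤ 2*a*K := by linarith [(abs_le.mp hf).1]
      have he : 0 < Real.exp (2*a*x) := Real.exp_pos _
      have key : 0 ≤ Real.exp (2*a*x) * (2*a*K + l^2*c x*u x) :=
        mul_nonneg he.le (by linarith)
      rw [h]
      nlinarith [key]
  have hhmono : MonotoneOn (fun x => Real.exp (2*a*x) * (u' x + K)) (Set.Ici 0) := by
    apply monotoneOn_of_deriv_nonneg (convex_Ici 0)
    · exact fun x _ => (hhderiv x).continuousAt.continuousWithinAt
    · exact fun x _ => (hhderiv x).differentiableAt.differentiableWithinAt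
    · intro x hx
      rw [interior_Ici] at hx
      rw [(hhderiv x).deriv]
      have h := hode' x (le_of_lt hx)
      have hf := hforce x (le_of_lt hx)
      have h2 : l^2*c x*u x ≤ 2*a*K := (abs_le.mp hf).2
      have he : 0 < Real.exp (2*a*x) := Real.exp_pos _
      have key : 0 ≤ Real.exp (2*a*x) * (2*a*K - l^2*c x*u x) :=
        mul_nonneg he.le (by linarith)
      rw [h]
      nlinarith [key]
  -- bound on u'
  have hu'b : ∀ s ≥ (0:ℝ), (u' s)^2 ≤ (K + |u₁|)^2 := by
    intro s hs
    have he1 : 1 ≤ Real.exp (2*a*s) :=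
      Real.one_le_exp (mul_nonneg (mul_nonneg (by norm_num) ha.le) hs)
    have hgle : Real.exp (2*a*s) * (u' s - K) ≤ u₁ - K := by
      have := hganti Set.self_mem_Ici hs hs
      simpa [h1] using this
    have hhge : u₁ + K ≤ Real.exp (2*a*s) * (u' s + K) := by
      have := hhmono Set.self_mem_Ici hs hs
      simpa [h1] using this
    have hub : u' s ≤ K + |u₁| := by
      rcases le_or_gt (u' s) K with h | h
      · linarith [abs_nonneg u₁]
      · have h2 : u' s - K ≤ Real.exp (2*a*s) * (u' s - K) :=
          le_mul_of_one_le_left (by linarith) he1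
        linarith [le_abs_self u₁]
    have hlb : -(K + |u₁|) ≤ u' s := by
      rcases le_or_gt (-K) (u' s) with h | h
      · linarith [abs_nonneg u₁]
      · have h2 : Real.exp (2*a*s) * (u' s + K) ≤ u' s + K := by
          nlinarith [he1]
        linarith [neg_abs_le u₁]
    exact sq_le_sq' hlb hub
  ----------------------------------------------------------------
  intro t ht
  have hu2t := hu2 t ht
  have hu't : (u' t)^2 ≤ 2*K^2 + 2*u₁^2 := by
    have h := hu'b t ht
    have h2 := sq_add_le_aux K |u₁|
    rw [sq_abs] at h2
    linarith
  have hK2 : 2*a^4*K^2 = (l^2)^2*μ₂^2*u₁^2 + 3/2*a^2*(l^2)^2*μ₂^2*u₀^2 := by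
    have e1 : K^2 = (l^2*μ₂)^2 * M^2/(4*a^2) := by
      rw [hK_def]; field_simp; ring
    rw [e1, hM2]
    field_simp
    ring
  -- denominator-free forms
  have P1 : δ^2*S * (u t)^2 ≤ 2*u₁^2 + 3*(δ^2*S)*u₀^2 := by
    rw [← ha2]; linarith [hu2t]
  have P2 : δ^4*S^2 * (u' t)^2 ≤ 2*(δ^4*S^2)*u₁^2 + (l^2)^2*μ₂^2*u₁^2
      + 3/2*(δ^2*S)*(l^2)^2*μ₂^2*u₀^2 := by
    have h4 : a^4 = δ^4*S^2 := by
      rw [show (a:ℝ)^4 = (a^2)^2 by ring, ha2]; ring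
    have h5 : a^4 * (u' t)^2 ≤ 2*a^4*u₁^2 + 2*a^4*K^2 := by
      have := mul_le_mul_of_nonneg_left hu't (pow_nonneg ha.le 4)
      linarith
    rw [← h4]
    calc a^4 * (u' t)^2 ≤ 2*a^4*u₁^2 + 2*a^4*K^2 := h5
      _ = 2*a^4*u₁^2 + ((l^2)^2*μ₂^2*u₁^2 + 3/2*a^2*(l^2)^2*μ₂^2*u₀^2) := by
          rw [hK2]
      _ = 2*a^4*u₁^2 + (l^2)^2*μ₂^2*u₁^2 + 3/2*(a^2)*(l^2)^2*μ₂^2*u₀^2 := by ring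
      _ = 2*a^4*u₁^2 + (l^2)^2*μ₂^2*u₁^2 + 3/2*(δ^2*S)*(l^2)^2*μ₂^2*u₀^2 := by
          rw [ha2]
  -- multiply target by δ^4 S^2 > 0
  have hpos : (0:ℝ) < δ^4*S^2 := mul_pos (pow_pos hδ 4) (pow_pos hS 2)
  have hRHS : δ^4*S^2*((2 + 2 / δ ^ 2 + μ₂ ^ 2 / δ ^ 4) * B * u₁ ^ 2
      + 3 * (1 + μ₂ ^ 2 / (2 * δ ^ 2)) * A * u₀ ^ 2)
      = (2*(δ^4*S^2) + 2*δ^2*S^2 + μ₂^2*S^2)*B*u₁^2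
        + (3*(δ^4*S^2) + 3/2*μ₂^2*δ^2*S^2)*A*u₀^2 := by
    field_simp
  apply le_of_mul_le_mul_left _ hpos
  rw [hRHS]
  have T1 : B * (δ^4*S^2 * (u' t)^2) ≤ B * (2*(δ^4*S^2)*u₁^2 + (l^2)^2*μ₂^2*u₁^2
      + 3/2*(δ^2*S)*(l^2)^2*μ₂^2*u₀^2) :=
    mul_le_mul_of_nonneg_left P2 hB.le
  have T2 : (A*δ^2*S) * (δ^2*S * (u t)^2) ≤ (A*δ^2*S) * (2*u₁^2 + 3*(δ^2*S)*u₀^2) := by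
    apply mul_le_mul_of_nonneg_left P1
    exact mul_nonneg (mul_nonneg hA.le (sq_nonneg δ)) hS.le
  have e1 : B*((l^2)^2*(μ₂^2*u₁^2)) ≤ B*(S^2*(μ₂^2*u₁^2)) := by
    apply mul_le_mul_of_nonneg_left _ hB.le
    exact mul_le_mul_of_nonneg_right hl4S (by positivity)
  have e2 : A*(δ^2*S*(2*u₁^2)) ≤ B*S*(δ^2*S*(2*u₁^2)) := by
    apply mul_le_mul_of_nonneg_right hAS
    exact mul_nonneg (mul_nonneg (sq_nonneg δ) hS.le) (by positivity)
  have e3 : B*(l^2)^2*(3/2*(δ^2*S)*(μ₂^2*u₀^2)) ≤ A*S*(3/2*(δ^2*S)*(μ₂^2*u₀^2)) := by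
    apply mul_le_mul_of_nonneg_right hBS
    exact mul_nonneg (mul_nonneg (by norm_num) (mul_nonneg (sq_nonneg δ) hS.le)) (by positivity)
  linarith [T1, T2, e1, e2, e3]
end

section
/- Let δ > 0, λ > 0, σ > 0, r > 0 satisfy δλ^{4σ-2} > rμ₂, 2δr ≤ 1, and 4δ²λ^{4σ-2} ≥ (1+2rδ)μ₂. Let c be measurable with 0 ≤ c(t) ≤ μ₂, and let u solve u'' + 2δλ^{2σ}u' + λ²c(t)u = 0. Then E(t) := (u'(t)+δλ^{2σ}u(t))² + δ²λ^{4σ}u(t)² satisfies E'(t) ≤ −2rλ^{2(1−σ)} c(t) E(t) for a.e. t ≥ 0, hence E(t) ≤ E(0) exp(−2rλ^{2(1−σ)} ∫₀ᵗ c(s) ds). -/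
open Real MeasureTheory intervalIntegral Filter Topology

lemma myIntervalIntegrable (f : ℝ → ℝ) (a b C : ℝ) (hf : Measurable f)
    (hab : a ≤ b) (hC : ∀ x ∈ Set.Icc a b, |f x| ≤ C) :
    IntervalIntegrable f volume a b := by
  constructor
  · refine ⟨hf.aestronglyMeasurable.restrict, ?_⟩
    apply MeasureTheory.HasFiniteIntegral.restrict_of_bounded (C := C) measure_Ioc_lt_top
    filter_upwards [ae_restrict_mem measurableSet_Ioc] with x hx
    exact hC x ⟨le_of_lt hx.1, hx.2⟩
  · refine ⟨hf.aestronglyMeasurable.restrict, ?_⟩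
    apply MeasureTheory.HasFiniteIntegral.restrict_of_bounded (C := C) measure_Ioc_lt_top
    filter_upwards [ae_restrict_mem measurableSet_Ioc] with x hx
    exact absurd (lt_of_lt_of_le hx.1 (hx.2.trans hab)) (lt_irrefl _)

lemma myExpLe (x : ℝ) (hx : 0 ≤ x) : Real.exp (x - x^2) ≤ 1 + x := by
  have h1 : (0:ℝ) < 1 + x := by linarith
  rw [← Real.exp_log h1, Real.exp_le_exp]
  have h2 : Real.log (1+x)⁻¹ ≤ (1+x)⁻¹ - 1 := Real.log_le_sub_one_of_pos (by positivity)
  rw [Real.log_inv] at h2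
  have h3 : 1 - (1+x)⁻¹ ≤ Real.log (1+x) := by linarith
  have h4 : x - x^2 ≤ 1 - (1+x)⁻¹ := by
    have h5 : (1+x)⁻¹ * (1+x) = 1 := inv_mul_cancel₀ (ne_of_gt h1)
    nlinarith [mul_nonneg hx (mul_nonneg hx hx), inv_nonneg.2 h1.le]
  linarith

set_option maxHeartbeats 1000000 in
theorem stmt5 (δ l σ r μ₂ : ℝ) (hδ : 0 < δ) (hl : 0 < l) (hσ : 0 < σ) (hr : 0 < r)
    (h1 : δ * l ^ (4*σ - 2) > r * μ₂)
    (h2 : 2 * δ * r ≤ 1)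
    (h3 : 4 * δ ^ 2 * l ^ (4*σ - 2) ≥ (1 + 2 * r * δ) * μ₂)
    (c : ℝ → ℝ) (hc_meas : Measurable c)
    (hc : ∀ t ≥ (0:ℝ), 0 ≤ c t ∧ c t ≤ μ₂)
    (u u' u'' : ℝ → ℝ)
    (hu : ∀ t, HasDerivAt u (u' t) t) (hu' : ∀ t, HasDerivAt u' (u'' t) t)
    (hode : ∀ t ≥ (0:ℝ), u'' t + 2 * δ * l ^ (2*σ) * u' t + l ^ 2 * c t * u t = 0)
    (E : ℝ → ℝ)
    (hE : ∀ t, E t = (u' t + δ * l ^ (2*σ) * u t) ^ 2 + δ ^ 2 * l ^ (4*σ) * (u t) ^ 2) :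
    (∀ᵐ t ∂volume, 0 ≤ t → deriv E t ≤ -(2 * r * l ^ (2*(1-σ)) * c t) * E t) ∧
    ∀ t ≥ (0:ℝ),
      E t ≤ E 0 * Real.exp (-(2 * r * l ^ (2*(1-σ))) * ∫ s in (0:ℝ)..t, c s) := by
  set K := l ^ (2*(1-σ)) with hK
  set M := l ^ (4*σ - 2) with hM
  have hKpos : 0 < K := Real.rpow_pos_of_pos hl _
  have hMpos : 0 < M := Real.rpow_pos_of_pos hl _
  have e1 : l ^ (2*σ) = K * M := by
    rw [hK, hM, ← Real.rpow_add hl]; congr 1; ring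
  have e2 : l ^ (4*σ) = (K*M)^2 := by
    have h : l ^ (4*σ) = l ^ (2*σ) * l ^ (2*σ) := by
      rw [← Real.rpow_add hl]; congr 1; ring
    rw [h, e1]; ring
  have e3 : l ^ (2:ℕ) = K^2*M := by
    have h' : K * l ^ (2*σ) = l ^ (2*(1-σ) + 2*σ) := by
      rw [hK, ← Real.rpow_add hl]
    have h : l ^ (2:ℕ) = K * l ^ (2*σ) := by
      rw [h', show 2*(1-σ)+2*σ = ((2:ℕ):ℝ) by push_cast; ring, Real.rpow_natCast]
    rw [h, e1]; ring
  -- derivative of E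
  have hDE : ∀ τ, HasDerivAt E
      (2*(u' τ + δ*l^(2*σ)*u τ)*(u'' τ + δ*l^(2*σ)*u' τ) + δ^2*l^(4*σ)*(2*u τ*u' τ)) τ := by
    intro τ
    have hEf : E = fun s => (u' s + δ*l^(2*σ)*u s)^2 + δ^2*l^(4*σ)*(u s)^2 := funext hE
    rw [hEf]
    have ha : HasDerivAt (fun s => u' s + δ*l^(2*σ)*u s) (u'' τ + δ*l^(2*σ)*u' τ) τ :=
      (hu' τ).add ((hu τ).const_mul _)
    have hb := ha.pow 2
    have hcc := ((hu τ).pow 2).const_mul (δ^2*l^(4*σ))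
    refine (hb.add hcc).congr_deriv ?_
    push_cast; ring
  have hkey : ∀ τ, 0 ≤ τ → deriv E τ ≤ -(2*r*K*c τ) * E τ := by
    intro τ hτ
    rw [(hDE τ).deriv, hE τ]
    obtain ⟨hc0, hcμ⟩ := hc τ hτ
    have hode' := hode τ hτ
    have hu2 : u'' τ = -(2*δ*l^(2*σ)*u' τ) - l^(2:ℕ)*c τ*u τ := by linarith
    rw [hu2, e1, e2, e3]
    set a := u τ
    set b := u' τ
    set ct := c τ
    have hA : 0 < δ*M - r*ct := by nlinarith [mul_le_mul_of_nonneg_left hcμ hr.le]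
    have h1p : 0 ≤ 1 - 2*r*δ := by linarith
    have hnn : 0 ≤ 4*δ^2*M - (1+2*r*δ)*ct := by
      nlinarith [mul_le_mul_of_nonneg_left hcμ (by positivity : (0:ℝ) ≤ 1+2*r*δ)]
    have hdisc : (K*M*ct*(1-2*r*δ))^2 ≤ 4*(δ*M - r*ct)*(δ*K^2*M^2*ct*(1-2*r*δ)) := by
      have hfac : 4*(δ*M-r*ct)*(δ*K^2*M^2*ct*(1-2*r*δ)) - (K*M*ct*(1-2*r*δ))^2
          = K^2*M^2*ct*(1-2*r*δ)*(4*δ^2*M - (1+2*r*δ)*ct) := by ring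
      have hprod : 0 ≤ K^2*M^2*ct*(1-2*r*δ)*(4*δ^2*M - (1+2*r*δ)*ct) :=
        mul_nonneg (mul_nonneg (mul_nonneg (mul_nonneg
          (sq_nonneg K) (sq_nonneg M)) hc0) h1p) hnn
      linarith
    have hquad : 0 ≤ (δ*M - r*ct)*b^2 + (K*M*ct*(1-2*r*δ))*(a*b)
        + (δ*K^2*M^2*ct*(1-2*r*δ))*a^2 := by
      nlinarith [sq_nonneg (2*(δ*M-r*ct)*b + K*M*ct*(1-2*r*δ)*a), hA, hdisc,
        mul_nonneg (sub_nonneg.2 hdisc) (sq_nonneg a)]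
    have h2K : 0 ≤ 2*K*((δ*M - r*ct)*b^2 + (K*M*ct*(1-2*r*δ))*(a*b)
        + (δ*K^2*M^2*ct*(1-2*r*δ))*a^2) := mul_nonneg (by positivity) hquad
    linarith
  refine ⟨ae_of_all _ hkey, ?_⟩
  -- PART 2
  have hμ₂ : 0 ≤ μ₂ := le_trans (hc 0 le_rfl).1 (hc 0 le_rfl).2
  have hucont : Continuous u := by
    have hd : Differentiable ℝ u := fun τ => (hu τ).differentiableAt
    exact hd.continuous
  have hu'cont : Continuous u' := by
    have hd : Differentiable ℝ u' := fun τ => (hu' τ).differentiableAt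
    exact hd.continuous
  have hE0 : ∀ τ, 0 ≤ E τ := fun τ => by rw [hE τ]; positivity
  have hEcont : Continuous E := by
    have hd : Differentiable ℝ E := fun τ => (hDE τ).differentiableAt
    exact hd.continuous
  have hanti : AntitoneOn E (Set.Ici 0) := by
    apply antitoneOn_of_deriv_nonpos (convex_Ici 0) hEcont.continuousOn
      (fun x _ => (hDE x).differentiableAt.differentiableWithinAt)
    intro x hx
    rw [interior_Ici] at hx
    have hx0 : 0 ≤ x := le_of_lt hx
    have h0 : 0 ≤ (2*r*K*c x) * E x :=
      mul_nonneg (mul_nonneg (by positivity) (hc x hx0).1) (hE0 x)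
    linarith [hkey x hx0]
  have hDeq : ∀ x, 0 ≤ x → deriv E x
      = -(2*δ*(K*M))*(u' x)^2 - 2*(K^2*M)*(c x)*(u x*u' x)
        - 2*δ*(K*M)*(K^2*M)*(c x)*(u x)^2 := by
    intro x hx
    rw [(hDE x).deriv]
    have hode' := hode x hx
    rw [e1, e3] at hode'
    rw [e1, e2]
    linear_combination (2*(u' x + δ*(K*M)*u x)) * hode'
  have hgint : ∀ p q : ℝ, 0 ≤ p → p ≤ q →
      IntervalIntegrable (fun τ => 2*r*K*c τ) volume p q := by
    intro p q hp hpq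
    apply myIntervalIntegrable _ _ _ (2*r*K*μ₂) ((hc_meas.const_mul (2*r*K))) hpq
    intro x hx
    have hcx := hc x (hp.trans hx.1)
    rw [abs_of_nonneg (mul_nonneg (by positivity) hcx.1)]
    exact mul_le_mul_of_nonneg_left hcx.2 (by positivity)
  have hgnonneg : ∀ p q : ℝ, 0 ≤ p → p ≤ q → 0 ≤ ∫ τ in p..q, 2*r*K*c τ := by
    intro p q hp hpq
    apply intervalIntegral.integral_nonneg hpq
    intro x hx
    exact mul_nonneg (by positivity) (hc x (hp.trans hx.1)).1
  have hgupper : ∀ p q : ℝ, 0 ≤ p → p ≤ q →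
      (∫ τ in p..q, 2*r*K*c τ) ≤ 2*r*K*μ₂*(q-p) := by
    intro p q hp hpq
    have h := intervalIntegral.integral_mono_on (μ := volume) hpq (hgint p q hp hpq)
      intervalIntegrable_const (g := fun _ => 2*r*K*μ₂)
      (fun x hx => mul_le_mul_of_nonneg_left (hc x (hp.trans hx.1)).2 (by positivity))
    rw [intervalIntegral.integral_const, smul_eq_mul] at h
    linarith
  -- the key integral inequality
  have star : ∀ p q : ℝ, 0 ≤ p → p ≤ q →
      E q + (∫ τ in p..q, 2*r*K*c τ) * E q ≤ E p := by
    intro p q hp hpq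
    obtain ⟨Bu, hBu⟩ := (isCompact_Icc (a := p) (b := q)).exists_bound_of_continuousOn
      hucont.continuousOn
    obtain ⟨Bv, hBv⟩ := (isCompact_Icc (a := p) (b := q)).exists_bound_of_continuousOn
      hu'cont.continuousOn
    simp only [Real.norm_eq_abs] at hBu hBv
    have hint : IntervalIntegrable (deriv E) volume p q := by
      apply myIntervalIntegrable _ _ _
        (2*δ*(K*M)*Bv^2 + K^2*M*μ₂*(Bu^2+Bv^2) + 2*δ*(K*M)*(K^2*M)*μ₂*Bu^2)
        (measurable_deriv E) hpq
      intro x hx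
      have hx0 : 0 ≤ x := hp.trans hx.1
      obtain ⟨hc0, hcμ⟩ := hc x hx0
      have ha2 : (u x)^2 ≤ Bu^2 := by
        have := abs_le.1 (hBu x hx); nlinarith
      have hb2 : (u' x)^2 ≤ Bv^2 := by
        have := abs_le.1 (hBv x hx); nlinarith
      rw [hDeq x hx0]
      have g1 : 0 ≤ K^2*M*(c x*(u x+u' x)^2) :=
        mul_nonneg (by positivity) (mul_nonneg hc0 (sq_nonneg _))
      have g2 : 0 ≤ K^2*M*(c x*(u x-u' x)^2) :=
        mul_nonneg (by positivity) (mul_nonneg hc0 (sq_nonneg _))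
      have g3 : 0 ≤ K^2*M*((μ₂-c x)*((u x)^2+(u' x)^2)) :=
        mul_nonneg (by positivity) (mul_nonneg (by linarith)
          (add_nonneg (sq_nonneg _) (sq_nonneg _)))
      have g4 : 0 ≤ K^2*M*(μ₂*((Bu^2-(u x)^2)+(Bv^2-(u' x)^2))) :=
        mul_nonneg (by positivity) (mul_nonneg hμ₂ (by linarith))
      have g5 : 0 ≤ 2*δ*(K*M)*(K^2*M)*((μ₂-c x)*(u x)^2) :=
        mul_nonneg (by positivity) (mul_nonneg (by linarith) (sq_nonneg _))
      have g6 : 0 ≤ 2*δ*(K*M)*(K^2*M)*(μ₂*(Bu^2-(u x)^2)) :=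
        mul_nonneg (by positivity) (mul_nonneg hμ₂ (by linarith))
      have g7 : 0 ≤ 2*δ*(K*M)*(Bv^2-(u' x)^2) :=
        mul_nonneg (by positivity) (by linarith)
      have g8 : 0 ≤ 2*δ*(K*M)*(u' x)^2 :=
        mul_nonneg (by positivity) (sq_nonneg _)
      have g9 : 0 ≤ 2*δ*(K*M)*(K^2*M)*(c x*(u x)^2) :=
        mul_nonneg (by positivity) (mul_nonneg hc0 (sq_nonneg _))
      rw [abs_le]
      constructor
      · nlinarith [g2, g3, g4, g5, g6, g7]
      · nlinarith [g1, g3, g4, g8, g9, g5, g6]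
    have hftc : ∫ τ in p..q, deriv E τ = E q - E p :=
      intervalIntegral.integral_eq_sub_of_hasDerivAt
        (fun x _ => (hDE x).differentiableAt.hasDerivAt) hint
    have hcmp_int : IntervalIntegrable (fun τ => -(2*r*K*c τ)*E q) volume p q := by
      apply myIntervalIntegrable _ _ _ (2*r*K*μ₂*|E q|)
        (((hc_meas.const_mul (2*r*K)).neg).mul_const (E q)) hpq
      intro x hx
      have hcx := hc x (hp.trans hx.1)
      simp only [Pi.neg_apply]; rw [abs_mul, abs_neg, abs_of_nonneg (mul_nonneg (by positivity) hcx.1)]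
      exact mul_le_mul_of_nonneg_right
        (mul_le_mul_of_nonneg_left hcx.2 (by positivity)) (abs_nonneg _)
    have hmono : (∫ τ in p..q, deriv E τ) ≤ ∫ τ in p..q, -(2*r*K*c τ)*E q := by
      apply intervalIntegral.integral_mono_on hpq hint hcmp_int
      intro x hx
      have hx0 : 0 ≤ x := hp.trans hx.1
      have hEq : E q ≤ E x := hanti (Set.mem_Ici.2 hx0) (Set.mem_Ici.2 (hp.trans hpq)) hx.2
      have hm : 0 ≤ 2*r*K*c x := mul_nonneg (by positivity) (hc x hx0).1
      have := mul_le_mul_of_nonneg_left hEq hm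
      linarith [hkey x hx0]
    have heval : (∫ τ in p..q, -(2*r*K*c τ)*E q)
        = -(∫ τ in p..q, 2*r*K*c τ) * E q := by
      have : (fun τ => -(2*r*K*c τ)*E q) = fun τ => (2*r*K*c τ)*(-(E q)) := by
        funext τ; ring
      rw [this, intervalIntegral.integral_mul_const]
      ring
    rw [heval] at hmono
    rw [hftc] at hmono
    linarith
  -- conclusion by partition
  intro t ht
  have hXrw : (∫ τ in (0:ℝ)..t, 2*r*K*c τ) = (2*r*K) * ∫ s in (0:ℝ)..t, c s := by
    rw [← intervalIntegral.integral_const_mul]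
  rcases eq_or_lt_of_le ht with h0 | htpos
  · rw [← h0]
    simp
  set X := ∫ τ in (0:ℝ)..t, 2*r*K*c τ with hXdef
  have hXnn : 0 ≤ X := hgnonneg 0 t le_rfl ht
  set Cg := 2*r*K*μ₂ with hCg
  have hCgnn : 0 ≤ Cg := by positivity
  have hn : ∀ n : ℕ, 1 ≤ n →
      E t ≤ E 0 * Real.exp (-X + Cg^2*t^2/n) := by
    intro n hn1
    have hnpos : (0:ℝ) < n := by exact_mod_cast hn1
    set h := t/n with hh
    have hhpos : 0 < h := div_pos htpos hnpos
    have claim : ∀ k : ℕ,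
        E (k*h) * Real.exp ((∫ τ in (0:ℝ)..(k*h), 2*r*K*c τ) - k*(Cg*h)^2) ≤ E 0 := by
      intro k
      induction k with
      | zero => simp
      | succ k ih =>
        have hs0 : (0:ℝ) ≤ k*h := by positivity
        have hq0 : ((k:ℝ)*h) ≤ (k+1)*h := by nlinarith
        set x := ∫ τ in ((k:ℝ)*h)..((k+1)*h), 2*r*K*c τ with hx
        have hx0 : 0 ≤ x := hgnonneg _ _ hs0 hq0
        have hxle : x ≤ Cg*h := by
          have := hgupper ((k:ℝ)*h) ((k+1)*h) hs0 hq0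
          have he : ((k:ℝ)+1)*h - k*h = h := by ring
          rw [he] at this
          exact this
        have hexp : Real.exp (x - (Cg*h)^2) ≤ 1 + x := by
          have h1 : x^2 ≤ (Cg*h)^2 := by nlinarith
          calc Real.exp (x - (Cg*h)^2) ≤ Real.exp (x - x^2) := by
                apply Real.exp_le_exp.2; linarith
            _ ≤ 1 + x := myExpLe x hx0
        have hstar := star ((k:ℝ)*h) ((k+1)*h) hs0 hq0
        have hadd : (∫ τ in (0:ℝ)..(((k:ℝ)+1)*h), 2*r*K*c τ)
            = (∫ τ in (0:ℝ)..((k:ℝ)*h), 2*r*K*c τ) + x := by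
          rw [hx, intervalIntegral.integral_add_adjacent_intervals
            (hgint 0 _ le_rfl hs0) (hgint _ _ hs0 hq0)]
        have hEq0 : 0 ≤ E (((k:ℝ)+1)*h) := hE0 _
        have step1 : E (((k:ℝ)+1)*h) * Real.exp (x - (Cg*h)^2) ≤ E ((k:ℝ)*h) := by
          calc E (((k:ℝ)+1)*h) * Real.exp (x - (Cg*h)^2)
              ≤ E (((k:ℝ)+1)*h) * (1+x) := mul_le_mul_of_nonneg_left hexp hEq0
            _ ≤ E ((k:ℝ)*h) := by linarith
        have hcast : ((k+1:ℕ):ℝ) = (k:ℝ)+1 := by push_cast; ring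
        rw [hcast]
        have hsplit : Real.exp (((∫ τ in (0:ℝ)..((k:ℝ)*h), 2*r*K*c τ) + x)
              - ((k:ℝ)+1)*(Cg*h)^2)
            = Real.exp (x - (Cg*h)^2)
              * Real.exp ((∫ τ in (0:ℝ)..((k:ℝ)*h), 2*r*K*c τ) - k*(Cg*h)^2) := by
          rw [← Real.exp_add]; congr 1; ring
        calc E (((k:ℝ)+1)*h) * Real.exp ((∫ τ in (0:ℝ)..(((k:ℝ)+1)*h), 2*r*K*c τ)
              - ((k:ℝ)+1)*(Cg*h)^2)
            = (E (((k:ℝ)+1)*h) * Real.exp (x - (Cg*h)^2))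
              * Real.exp ((∫ τ in (0:ℝ)..((k:ℝ)*h), 2*r*K*c τ) - k*(Cg*h)^2) := by
              rw [hadd, hsplit]; ring
          _ ≤ E ((k:ℝ)*h) * Real.exp ((∫ τ in (0:ℝ)..((k:ℝ)*h), 2*r*K*c τ)
              - k*(Cg*h)^2) := mul_le_mul_of_nonneg_right step1 (Real.exp_pos _).le
          _ ≤ E 0 := ih
    have hnh : (n:ℝ)*h = t := by
      rw [hh]; field_simp
    have hc2 : (n:ℝ)*(Cg*h)^2 = Cg^2*t^2/n := by
      rw [hh]; field_simp
    have hfin := claim n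
    rw [hnh] at hfin
    have hone : Real.exp (X - n*(Cg*h)^2) * Real.exp (-X + n*(Cg*h)^2) = 1 := by
      rw [← Real.exp_add, show (X - n*(Cg*h)^2) + (-X + n*(Cg*h)^2) = 0 by ring,
        Real.exp_zero]
    calc E t = (E t * Real.exp (X - n*(Cg*h)^2)) * Real.exp (-X + n*(Cg*h)^2) := by
          rw [mul_assoc, hone, mul_one]
      _ ≤ E 0 * Real.exp (-X + n*(Cg*h)^2) :=
          mul_le_mul_of_nonneg_right hfin (Real.exp_pos _).le
      _ = E 0 * Real.exp (-X + Cg^2*t^2/n) := by rw [hc2]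
  have hlim : Tendsto (fun n : ℕ => E 0 * Real.exp (-X + Cg^2*t^2/n)) atTop
      (𝓝 (E 0 * Real.exp (-X + 0))) := by
    apply Tendsto.const_mul
    apply (Real.continuous_exp.tendsto _).comp
    exact tendsto_const_nhds.add (tendsto_const_div_atTop_nhds_zero_nat _)
  have hfinal : E t ≤ E 0 * Real.exp (-X + 0) :=
    ge_of_tendsto hlim (eventually_atTop.2 ⟨1, fun n hn1 => hn n hn1⟩)
  rw [add_zero, hXrw] at hfinal
  rw [show -(2*r*K) * ∫ s in (0:ℝ)..t, c s
      = -(2*r*K * ∫ s in (0:ℝ)..t, c s) by ring]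
  exact hfinal
end

section
/- Let δ > 0, λ > 0, σ ≥ 0, let ω be a continuity modulus, and assume 4δ²μ₁ ≥ [λ^{1−2σ}ω(1/λ)]² + 2δ[λ^{1−2σ}ω(1/λ)]. Let c be ω-continuous with μ₁ ≤ c(t) ≤ μ₂ and let u solve u'' + 2δλ^{2σ}u' + λ²c(t)u = 0 with u(0)=u₀, u'(0)=u₁. Then |u'(t)|² + 2λ²μ₁|u(t)|² ≤ 4u₁² + 2(3δ²λ^{4σ} + λ²μ₂)u₀² for all t ≥ 0. -/
open Real MeasureTheory

private lemma stmt9_aux (a l W μ₁ ct x y d e : ℝ) (hapos : 0 < a) (hl : 0 < l)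
    (key : l^4*W^2 + 2*a*l^3*W ≤ 4*a^2*l^2*μ₁)
    (hdle : |d| ≤ W) (hele : |e| ≤ W) (hcμ : μ₁ ≤ ct) :
    -(2*a)*y^2 + 2*l^2*d*(x*y) + l^3*e*x^2 - 2*a*l^2*ct*x^2 ≤ 0 := by
  set X := |x| with hX
  set Y := |y| with hY
  have hX2 : X^2 = x^2 := sq_abs x
  have hY2 : Y^2 = y^2 := sq_abs y
  have hXY : d * (x*y) ≤ W * (X*Y) := by
    calc d * (x*y) ≤ |d * (x*y)| := le_abs_self _
      _ = |d| * (X*Y) := by rw [abs_mul, abs_mul]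
      _ ≤ W * (X*Y) := mul_le_mul_of_nonneg_right hdle (by positivity)
  have hex : e * x^2 ≤ W * x^2 :=
    mul_le_mul_of_nonneg_right (le_of_abs_le hele) (sq_nonneg x)
  clear_value X Y
  have hQ : 2*a*Y^2 - 2*l^2*W*(X*Y) + (2*a*l^2*μ₁ - l^3*W)*X^2 ≥ 0 := by
    have hk : (0:ℝ) ≤ (4*a^2*l^2*μ₁ - l^4*W^2 - 2*a*l^3*W) * X^2 :=
      mul_nonneg (by linarith [key]) (sq_nonneg X)
    have h2aQ : (0:ℝ) ≤ (2*a) * (2*a*Y^2 - 2*l^2*W*(X*Y) + (2*a*l^2*μ₁ - l^3*W)*X^2) := by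
      nlinarith [sq_nonneg (2*a*Y - l^2*W*X), hk]
    exact (mul_nonneg_iff_of_pos_left (by linarith [hapos])).mp h2aQ
  have hXY' : 2*l^2*(d*(x*y)) ≤ 2*l^2*(W*(X*Y)) :=
    mul_le_mul_of_nonneg_left hXY (by positivity)
  have hex' : l^3*(e*x^2) ≤ l^3*(W*x^2) :=
    mul_le_mul_of_nonneg_left hex (by positivity)
  have hc' : 2*a*l^2*μ₁*x^2 ≤ (2*a*l^2*ct)*x^2 :=
    mul_le_mul_of_nonneg_right
      (mul_le_mul_of_nonneg_left hcμ
        (mul_nonneg (mul_nonneg (by norm_num) hapos.le) (sq_nonneg l))) (sq_nonneg x)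
  have hY2' : 2*a*Y^2 = 2*a*y^2 := by rw [hY2]
  have hX2' : (2*a*l^2*μ₁ - l^3*W)*X^2 = (2*a*l^2*μ₁ - l^3*W)*x^2 := by rw [hX2]
  linarith [hQ, hXY', hex', hc', hY2', hX2']

private lemma stmt9_aux2 (a l μ₂ g0 u₀ u₁ : ℝ) (hg2 : g0 ≤ μ₂) :
    (u₁ + a*u₀)^2 + a^2*u₀^2 + l^2*g0*u₀^2 ≤ 2*u₁^2 + (3*a^2 + l^2*μ₂)*u₀^2 := by
  nlinarith [sq_nonneg (u₁ - a*u₀), mul_le_mul_of_nonneg_right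
    (mul_le_mul_of_nonneg_left hg2 (sq_nonneg l)) (sq_nonneg u₀)]

private lemma stmt9_aux3 (a l μ₁ gt x y : ℝ) (hg1 : μ₁ ≤ gt) :
    (1/2)*y^2 + l^2*μ₁*x^2 ≤ (y + a*x)^2 + a^2*x^2 + l^2*gt*x^2 := by
  nlinarith [sq_nonneg (y + 2*a*x), mul_le_mul_of_nonneg_right
    (mul_le_mul_of_nonneg_left hg1 (sq_nonneg l)) (sq_nonneg x)]

theorem stmt9 (δ l σ μ₁ μ₂ : ℝ) (hδ : 0 < δ) (hl : 0 < l) (hσ : 0 ≤ σ)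
    (ω : ℝ → ℝ) (hω_cont : Continuous ω) (hω0 : ω 0 = 0)
    (hω_pos : ∀ x > (0:ℝ), 0 < ω x) (hω_mono : Monotone ω)
    (hω_mono2 : ∀ x y : ℝ, 0 < x → x ≤ y → x / ω x ≤ y / ω y)
    (hmain : 4 * δ ^ 2 * μ₁ ≥
      (l ^ (1 - 2*σ) * ω (1/l)) ^ 2 + 2 * δ * (l ^ (1 - 2*σ) * ω (1/l)))
    (c : ℝ → ℝ)
    (hc_bound : ∀ t ≥ (0:ℝ), μ₁ ≤ c t ∧ c t ≤ μ₂)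
    (hc_ω : ∀ a ≥ (0:ℝ), ∀ b ≥ (0:ℝ), |c a - c b| ≤ ω |a - b|)
    (u u' u'' : ℝ → ℝ)
    (hu : ∀ t, HasDerivAt u (u' t) t) (hu' : ∀ t, HasDerivAt u' (u'' t) t)
    (hode : ∀ t ≥ (0:ℝ), u'' t + 2 * δ * l ^ (2*σ) * u' t + l ^ 2 * c t * u t = 0)
    (u₀ u₁ : ℝ) (h0 : u 0 = u₀) (h1 : u' 0 = u₁) :
    ∀ t ≥ (0:ℝ),
      (u' t) ^ 2 + 2 * l ^ 2 * μ₁ * (u t) ^ 2 ≤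
        4 * u₁ ^ 2 + 2 * (3 * δ ^ 2 * l ^ (4*σ) + l ^ 2 * μ₂) * u₀ ^ 2 := by
  set ε : ℝ := 1/l with hε
  have hεpos : 0 < ε := by positivity
  set W : ℝ := ω (1/l) with hW
  have hWpos : 0 < W := hω_pos _ (by positivity)
  set B : ℝ := l ^ (2*σ) with hB
  have hBpos : 0 < B := rpow_pos_of_pos hl _
  set a : ℝ := δ * B with ha
  have hapos : 0 < a := by positivity
  -- rpow identities
  have hB2 : l ^ (4*σ) = B ^ 2 := by
    rw [hB, ← Real.rpow_natCast (l ^ (2*σ)) 2, ← Real.rpow_mul hl.le]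
    norm_num; ring_nf
  have hGB : l ^ (1 - 2*σ) * B = l := by
    rw [hB, ← Real.rpow_add hl]
    norm_num
  -- key discriminant inequality
  have key : l^4*W^2 + 2*a*l^3*W ≤ 4*a^2*l^2*μ₁ := by
    have h1 : l * W = (l ^ (1-2*σ) * W) * B := by rw [mul_right_comm, hGB]
    have h2 : (l ^ (1-2*σ) * W)^2 + 2*δ*(l ^ (1-2*σ) * W) ≤ 4*δ^2*μ₁ := hmain
    set P := l ^ (1-2*σ) * W with hP
    have e1 : l^4*W^2 + 2*a*l^3*W = l^2*B^2*(P^2 + 2*δ*P) := by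
      rw [ha]; linear_combination (l^2*(l*W + P*B) + 2*δ*B*l^2) * h1
    have e2 : l^2*B^2*(P^2 + 2*δ*P) ≤ l^2*B^2*(4*δ^2*μ₁) :=
      mul_le_mul_of_nonneg_left h2 (by positivity)
    calc l^4*W^2 + 2*a*l^3*W = l^2*B^2*(P^2 + 2*δ*P) := e1
      _ ≤ l^2*B^2*(4*δ^2*μ₁) := e2
      _ = 4*a^2*l^2*μ₁ := by rw [ha]; ring
  clear_value W B a
  -- extended coefficient
  set C : ℝ → ℝ := fun t => c (max t 0) with hCdef
  have hCω : ∀ s t : ℝ, |C s - C t| ≤ ω |s - t| := by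
    intro s t
    calc |C s - C t| ≤ ω |max s 0 - max t 0| :=
          hc_ω _ (le_max_right _ _) _ (le_max_right _ _)
      _ ≤ ω |s - t| := hω_mono (abs_max_sub_max_le_abs _ _ _)
  have hCcont : Continuous C := by
    rw [continuous_iff_continuousAt]
    intro t
    rw [ContinuousAt, tendsto_iff_dist_tendsto_zero]
    have hb : Filter.Tendsto (fun s => ω |s - t|) (nhds t) (nhds 0) := by
      have habs : ContinuousAt (fun s : ℝ => |s - t|) t :=
        (continuousAt_id.sub continuousAt_const).abs
      have h2 := hω_cont.continuousAt.comp habs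
      simpa [ContinuousAt, Function.comp_def, sub_self, abs_zero, hω0] using h2
    refine squeeze_zero (fun s => dist_nonneg) (fun s => ?_) hb
    rw [Real.dist_eq]; exact hCω s t
  have hCb : ∀ s, μ₁ ≤ C s ∧ C s ≤ μ₂ := fun s => hc_bound _ (le_max_right _ _)
  have hCeq : ∀ t ≥ (0:ℝ), C t = c t := fun t ht => by
    simp [hCdef, max_eq_left ht]
  -- the averaged coefficient
  set F : ℝ → ℝ := fun x => ∫ s in (0:ℝ)..x, C s with hFdef
  have hF : ∀ t, HasDerivAt F (C t) t := fun t =>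
    intervalIntegral.integral_hasDerivAt_right (hCcont.intervalIntegrable _ _)
      (hCcont.stronglyMeasurableAtFilter _ _) hCcont.continuousAt
  set g : ℝ → ℝ := fun t => l * (F (t+ε) - F t) with hgdef
  have hg : ∀ t, HasDerivAt g (l * (C (t+ε) - C t)) t := by
    intro t
    have h1 : HasDerivAt (fun x : ℝ => F (x + ε)) (C (t+ε)) t := by
      have := HasDerivAt.comp t (hF (t+ε)) ((hasDerivAt_id t).add_const ε)
      simpa [Function.comp_def] using this
    exact ((h1.sub (hF t)).const_mul l)
  have hgval : ∀ t, g t = l * ∫ s in t..(t+ε), C s := by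
    intro t
    have := intervalIntegral.integral_add_adjacent_intervals
      (hCcont.intervalIntegrable (μ := volume) 0 t)
      (hCcont.intervalIntegrable (μ := volume) t (t+ε))
    simp only [hgdef, hFdef]
    rw [← this]; ring
  have hgb : ∀ t, μ₁ ≤ g t ∧ g t ≤ μ₂ := by
    intro t
    have hle : t ≤ t + ε := by linarith
    have h1 : ∫ s in t..(t+ε), μ₁ ≤ ∫ s in t..(t+ε), C s :=
      intervalIntegral.integral_mono_on hle (intervalIntegrable_const)
        (hCcont.intervalIntegrable _ _) (fun s _ => (hCb s).1)
    have h2 : ∫ s in t..(t+ε), C s ≤ ∫ s in t..(t+ε), μ₂ :=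
      intervalIntegral.integral_mono_on hle (hCcont.intervalIntegrable _ _)
        (intervalIntegrable_const) (fun s _ => (hCb s).2)
    rw [intervalIntegral.integral_const] at h1 h2
    simp only [smul_eq_mul] at h1 h2
    have hlε : l * ε = 1 := by rw [hε]; exact mul_one_div_cancel hl.ne'
    have h1' := mul_le_mul_of_nonneg_left h1 hl.le
    have h2' := mul_le_mul_of_nonneg_left h2 hl.le
    have e1 : l * ((t + ε - t) * μ₁) = μ₁ := by
      rw [show t + ε - t = ε by ring, ← mul_assoc, hlε, one_mul]
    have e2 : l * ((t + ε - t) * μ₂) = μ₂ := by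
      rw [show t + ε - t = ε by ring, ← mul_assoc, hlε, one_mul]
    rw [e1] at h1'
    rw [e2] at h2'
    rw [hgval]
    exact ⟨h1', h2'⟩
  -- |g - c| ≤ W on t ≥ 0
  have hgc : ∀ t ≥ (0:ℝ), |g t - c t| ≤ W := by
    intro t ht
    have hle : t ≤ t + ε := by linarith
    have hlε : l * ε = 1 := by rw [hε]; exact mul_one_div_cancel hl.ne'
    have hbnd : ∀ s ∈ Set.Icc t (t+ε), C t - W ≤ C s ∧ C s ≤ C t + W := by
      intro s hs
      have h := hCω s t
      have habs : |s - t| ≤ 1/l := by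
        rw [abs_of_nonneg (by linarith [hs.1])]
        have := hs.2; rw [hε] at *; linarith
      have hωle : ω |s - t| ≤ W := by rw [hW]; exact hω_mono habs
      have := abs_le.mp h
      constructor <;> linarith [this.1, this.2]
    have h1 : ∫ s in t..(t+ε), (C t - W) ≤ ∫ s in t..(t+ε), C s :=
      intervalIntegral.integral_mono_on hle intervalIntegrable_const
        (hCcont.intervalIntegrable _ _) (fun s hs => (hbnd s hs).1)
    have h2 : ∫ s in t..(t+ε), C s ≤ ∫ s in t..(t+ε), (C t + W) :=
      intervalIntegral.integral_mono_on hle (hCcont.intervalIntegrable _ _)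
        intervalIntegrable_const (fun s hs => (hbnd s hs).2)
    rw [intervalIntegral.integral_const] at h1 h2
    simp only [smul_eq_mul] at h1 h2
    have hCt : C t = c t := hCeq t ht
    have h1' := mul_le_mul_of_nonneg_left h1 hl.le
    have h2' := mul_le_mul_of_nonneg_left h2 hl.le
    have e1 : l * ((t + ε - t) * (C t - W)) = c t - W := by
      rw [show t + ε - t = ε by ring, ← mul_assoc, hlε, one_mul, hCt]
    have e2 : l * ((t + ε - t) * (C t + W)) = c t + W := by
      rw [show t + ε - t = ε by ring, ← mul_assoc, hlε, one_mul, hCt]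
    rw [e1] at h1'
    rw [e2] at h2'
    rw [abs_le, hgval]
    constructor <;> linarith
  -- energy
  set E : ℝ → ℝ := fun t => (u' t + a * u t)^2 + a^2 * (u t)^2 + l^2 * g t * (u t)^2
    with hEdef
  have hE : ∀ t, HasDerivAt E
      (2*(u' t + a*u t)*(u'' t + a*u' t) + a^2*(2*u t*u' t)
        + l^2*((l*(C (t+ε) - C t))*(u t)^2 + g t*(2*u t*u' t))) t := by
    intro t
    have h1 : HasDerivAt (fun t => u' t + a * u t) (u'' t + a * u' t) t :=
      (hu' t).add ((hu t).const_mul a)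
    have h2 := h1.pow 2
    have h3 := ((hu t).pow 2).const_mul (a^2)
    have h4 := ((hg t).const_mul (l^2)).mul ((hu t).pow 2)
    have := (h2.add h3).add h4
    refine this.congr_deriv ?_
    norm_num
    ring
  have hEdiff : ∀ t, DifferentiableAt ℝ E t := fun t => (hE t).differentiableAt
  clear_value C F g E
  -- derivative nonpositive on t ≥ 0
  have hderiv_nonpos : ∀ t ≥ (0:ℝ), deriv E t ≤ 0 := by
    intro t ht
    rw [(hE t).deriv]
    set x := u t
    set y := u' t
    have hodet := hode t ht
    have hv : u'' t = -(2*a*y + l^2 * c t * x) := by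
      rw [ha]; linarith [hodet]
    set d := g t - c t with hd
    set e := C (t+ε) - C t with he
    have hdle : |d| ≤ W := hgc t ht
    have hele : |e| ≤ W := by
      rw [he, hCeq (t+ε) (by linarith), hCeq t ht]
      have habs : |t + ε - t| = 1/l := by
        rw [show t + ε - t = ε by ring, hε, abs_of_pos (by positivity)]
      calc |c (t+ε) - c t| ≤ ω |t + ε - t| := hc_ω _ (by linarith) _ ht
        _ = W := by rw [habs, hW]
    have hcμ : μ₁ ≤ c t := (hc_bound t ht).1
    have hrw : 2*(y + a*x)*(u'' t + a*y) + a^2*(2*x*y)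
        + l^2*((l*e)*x^2 + g t*(2*x*y))
        = -(2*a)*y^2 + 2*l^2*d*(x*y) + l^3*e*x^2 - 2*a*l^2*(c t)*x^2 := by
      rw [hv, hd]; ring
    rw [hrw]
    exact stmt9_aux a l W μ₁ (c t) x y d e hapos hl key hdle hele hcμ
  -- E is antitone on [0,∞)
  have hmono : AntitoneOn E (Set.Ici 0) := by
    apply antitoneOn_of_deriv_nonpos (convex_Ici 0)
    · exact (Differentiable.continuous (fun t => hEdiff t)).continuousOn
    · exact fun t _ => (hEdiff t).differentiableWithinAt
    · intro t ht
      rw [interior_Ici] at ht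
      exact hderiv_nonpos t (le_of_lt ht)
  intro t ht
  have hEt : E t ≤ E 0 := hmono (Set.self_mem_Ici) ht ht
  -- lower bound for E t
  have hlow : (1/2) * (u' t)^2 + l^2*μ₁*(u t)^2 ≤ E t := by
    simp only [hEdef]
    exact stmt9_aux3 a l μ₁ (g t) (u t) (u' t) (hgb t).1
  -- upper bound for E 0
  have hup : E 0 ≤ 2*u₁^2 + (3*a^2 + l^2*μ₂)*u₀^2 := by
    simp only [hEdef]
    rw [h0, h1]
    exact stmt9_aux2 a l μ₂ (g 0) u₀ u₁ (hgb 0).2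
  rw [hB2]
  have ha2 : δ^2*B^2*u₀^2 = a^2*u₀^2 := by rw [ha]; ring
  linarith [hlow, hEt, hup, ha2]
end

section
/- Let δ > 0, λ ≥ 1, σ ∈ [0,1/2], r ∈ (0,δ), and suppose 4(δ−r)(δμ₁−rμ₂) ≥ [λ^{1−2σ}ω(1/λ)]² + 2δ(1+2r)[λ^{1−2σ}ω(1/λ)] + 8rδ³. Let c be ω-continuous with μ₁ ≤ c(t) ≤ μ₂ and u solve u'' + 2δλ^{2σ}u' + λ²c(t)u = 0. Then |u'(t)|² + 2λ²μ₁|u(t)|² ≤ [4u₁² + 2(3δ²λ^{4σ}+λ²μ₂)u₀²] exp(−2rλ^{2σ}t) for every t ≥ 0. -/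
set_option maxHeartbeats 1600000

open Real MeasureTheory

lemma quad_form_aux (K B C x y : ℝ) (hK : 0 < K) (hdisc : B^2 + 4*K*C ≤ 0) :
    -K*x^2 + B*x*y + C*y^2 ≤ 0 := by
  nlinarith [sq_nonneg (2*K*x - B*y), mul_nonpos_of_nonpos_of_nonneg hdisc (sq_nonneg y),
    mul_pos hK hK, sq_nonneg y, sq_nonneg x]

lemma quad_aux (δ r s l W μ₁ μ₂ q cc ce x y : ℝ)
    (hr0 : 0 < r) (hrδ : r < δ) (hl0 : 0 < l) (hs0 : 0 < s) (hsl : s ≤ l)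
    (hW : 0 ≤ W)
    (hp : l * |ce - cc| ≤ s * W) (hq : l * |q| ≤ s * W)
    (hcc : μ₁ ≤ cc) (hce : ce ≤ μ₂)
    (hmain : 4*(δ-r)*(δ*μ₁-r*μ₂) ≥ W^2 + 2*δ*(1+2*r)*W + 8*r*δ^3) :
    2*(x + δ*s*y)*(-(δ*s)*x - l^2*cc*y) + 2*δ^2*s^2*y*x + l^2*(l*q)*y^2
      + 2*l^2*ce*y*x + 2*r*s*((x+δ*s*y)^2 + δ^2*s^2*y^2 + l^2*ce*y^2) ≤ 0 := by
  have hδ0 : 0 < δ := hr0.trans hrδ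
  have hdr : 0 < δ - r := by linarith
  have hpabs : |l^2*(ce-cc)| ≤ l*s*W := by
    have h2 : l^2*|ce-cc| ≤ l*(s*W) := by
      calc l^2*|ce-cc| = l*(l*|ce-cc|) := by ring
        _ ≤ l*(s*W) := mul_le_mul_of_nonneg_left hp (le_of_lt hl0)
    calc |l^2*(ce-cc)| = l^2*|ce-cc| := by
            rw [abs_mul, abs_of_nonneg (by positivity : (0:ℝ) ≤ l^2)]
      _ ≤ l*s*W := by linarith
  have hqabs : |l^3*q| ≤ l^2*s*W := by
    have h2 : l^3*|q| ≤ l^2*(s*W) := by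
      calc l^3*|q| = l^2*(l*|q|) := by ring
        _ ≤ l^2*(s*W) := mul_le_mul_of_nonneg_left hq (by positivity)
    calc |l^3*q| = l^3*|q| := by
            rw [abs_mul, abs_of_nonneg (by positivity : (0:ℝ) ≤ l^3)]
      _ ≤ l^2*s*W := by linarith
  have hp1 : l^2*(ce-cc) ≤ l*s*W := (abs_le.mp hpabs).2
  have hq1 : l^3*q ≤ l^2*s*W := (abs_le.mp hqabs).2
  have hcec : r*ce - δ*cc ≤ -(δ*μ₁ - r*μ₂) := by nlinarith
  have hnum : 4*(l*s*W)^2 + 16*r*δ*s^2*(l*s*W) + 16*r^2*δ^2*s^4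
      + 8*(δ-r)*s*(l^2*s*W) + 32*(δ-r)*r*δ^2*s^4
      ≤ 16*(δ-r)*s^2*l^2*(δ*μ₁-r*μ₂) := by
    have hmain' : (W^2 + 2*δ*(1+2*r)*W + 8*r*δ^3) * (4*s^2*l^2)
        ≤ (4*(δ-r)*(δ*μ₁-r*μ₂)) * (4*s^2*l^2) :=
      mul_le_mul_of_nonneg_right hmain (by positivity)
    have h1 : 0 ≤ r*δ*l*s^2*W*(l-s) :=
      mul_nonneg (by positivity) (sub_nonneg.mpr hsl)
    have h2 : 0 ≤ r*l^2*s^2*W := by positivity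
    have h3 : 0 ≤ r*δ^3*s^2*((l-s)*(l+s)) :=
      mul_nonneg (by positivity)
        (mul_nonneg (sub_nonneg.mpr hsl) (by positivity))
    have h4 : 0 ≤ r^2*δ^2*s^4 := by positivity
    nlinarith [hmain', h1, h2, h3, h4]
  have c1 : (16*r*δ*s^2) * (l^2*(ce-cc)) ≤ (16*r*δ*s^2) * (l*s*W) :=
    mul_le_mul_of_nonneg_left hp1 (by positivity)
  have c2 : (8*(δ-r)*s) * (l^3*q) ≤ (8*(δ-r)*s) * (l^2*s*W) :=
    mul_le_mul_of_nonneg_left hq1 (by positivity)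
  have c3 : (16*(δ-r)*s^2*l^2) * (r*ce - δ*cc) ≤ (16*(δ-r)*s^2*l^2) * (-(δ*μ₁-r*μ₂)) :=
    mul_le_mul_of_nonneg_left hcec (by positivity)
  have csq : (l^2*(ce-cc))^2 ≤ (l*s*W)^2 := sq_le_sq' (abs_le.mp hpabs).1 hp1
  have hdisc : (2*l^2*(ce-cc) + 4*r*δ*s^2)^2
      + 4*(2*(δ-r)*s)*(l^3*q + 4*r*δ^2*s^3 + 2*s*l^2*(r*ce - δ*cc)) ≤ 0 := by
    linarith [c1, c2, c3, csq, hnum]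
  have hK0 : 0 < 2*(δ-r)*s := by positivity
  have hmm := quad_form_aux (2*(δ-r)*s) (2*l^2*(ce-cc) + 4*r*δ*s^2)
    (l^3*q + 4*r*δ^2*s^3 + 2*s*l^2*(r*ce - δ*cc)) x y hK0 hdisc
  linarith [hmm]

theorem stmt10 (δ l σ r μ₁ μ₂ : ℝ) (hδ : 0 < δ) (hl : 1 ≤ l)
    (hσ : 0 ≤ σ ∧ σ ≤ 1/2) (hr : 0 < r ∧ r < δ)
    (ω : ℝ → ℝ) (hω_cont : Continuous ω) (hω0 : ω 0 = 0)
    (hω_pos : ∀ x > (0:ℝ), 0 < ω x) (hω_mono : Monotone ω)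
    (hω_mono2 : ∀ x y : ℝ, 0 < x → x ≤ y → x / ω x ≤ y / ω y)
    (hmain : 4 * (δ - r) * (δ * μ₁ - r * μ₂) ≥
      (l ^ (1 - 2*σ) * ω (1/l)) ^ 2
      + 2 * δ * (1 + 2*r) * (l ^ (1 - 2*σ) * ω (1/l)) + 8 * r * δ ^ 3)
    (c : ℝ → ℝ)
    (hc_bound : ∀ t ≥ (0:ℝ), μ₁ ≤ c t ∧ c t ≤ μ₂)
    (hc_ω : ∀ a ≥ (0:ℝ), ∀ b ≥ (0:ℝ), |c a - c b| ≤ ω |a - b|)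
    (u u' u'' : ℝ → ℝ)
    (hu : ∀ t, HasDerivAt u (u' t) t) (hu' : ∀ t, HasDerivAt u' (u'' t) t)
    (hode : ∀ t ≥ (0:ℝ), u'' t + 2 * δ * l ^ (2*σ) * u' t + l ^ 2 * c t * u t = 0)
    (u₀ u₁ : ℝ) (h0 : u 0 = u₀) (h1 : u' 0 = u₁) :
    ∀ t ≥ (0:ℝ),
      (u' t) ^ 2 + 2 * l ^ 2 * μ₁ * (u t) ^ 2 ≤
        (4 * u₁ ^ 2 + 2 * (3 * δ ^ 2 * l ^ (4*σ) + l ^ 2 * μ₂) * u₀ ^ 2)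
          * Real.exp (-(2 * r * l ^ (2*σ)) * t) := by
  obtain ⟨hσ0, hσ2⟩ := hσ
  obtain ⟨hr0, hrδ⟩ := hr
  have hl0 : (0:ℝ) < l := lt_of_lt_of_le one_pos hl
  set s := l ^ (2*σ) with hsdef
  have hs0 : 0 < s := Real.rpow_pos_of_pos hl0 _
  have hs1 : 1 ≤ s := by
    have h := Real.rpow_le_rpow_of_exponent_le hl (by linarith : (0:ℝ) ≤ 2*σ)
    simpa [Real.rpow_zero] using h
  have hsl : s ≤ l := by
    have h := Real.rpow_le_rpow_of_exponent_le hl (show 2*σ ≤ 1 by linarith)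
    simpa [Real.rpow_one] using h
  have hs4 : l ^ (4*σ) = s^2 := by
    rw [hsdef, sq, ← Real.rpow_add hl0]; ring_nf
  have hωl0 : 0 < ω (1/l) := hω_pos _ (by positivity)
  set W := l ^ (1-2*σ) * ω (1/l) with hWdef
  have hW0 : 0 ≤ W := mul_nonneg (Real.rpow_nonneg hl0.le _) hωl0.le
  have hlω : l * ω (1/l) = s * W := by
    have h : s * W = l ^ (2*σ) * l ^ (1-2*σ) * ω (1/l) := by rw [hWdef, hsdef]; ring
    rw [h, ← Real.rpow_add hl0, show 2*σ + (1-2*σ) = (1:ℝ) by ring, Real.rpow_one]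
  -- the everywhere-defined coefficient
  set d : ℝ → ℝ := fun t => c |t| with hddef
  have hd_eq : ∀ t ≥ (0:ℝ), d t = c t := fun t ht => by
    simp only [hddef, abs_of_nonneg ht]
  have hd_bound : ∀ t, μ₁ ≤ d t ∧ d t ≤ μ₂ := fun t => hc_bound _ (abs_nonneg t)
  have hωnn : ∀ x : ℝ, 0 ≤ x → 0 ≤ ω x := by
    intro x hx
    rcases eq_or_lt_of_le hx with h | h
    · rw [← h, hω0]
    · exact (hω_pos x h).le
  have hd_lip : ∀ a b : ℝ, |d a - d b| ≤ ω |a - b| := fun a b =>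
    (hc_ω _ (abs_nonneg a) _ (abs_nonneg b)).trans (hω_mono (abs_abs_sub_abs_le_abs_sub a b))
  have hd_cont : Continuous d := by
    rw [Metric.continuous_iff]
    intro b ε hε
    obtain ⟨δ', hδ', hh⟩ := Metric.continuousAt_iff.mp (hω_cont.continuousAt (x := 0)) ε hε
    refine ⟨δ', hδ', fun a ha => ?_⟩
    have h1 : |d a - d b| ≤ ω |a - b| := hd_lip a b
    have h2 : dist |a - b| 0 < δ' := by
      rw [Real.dist_eq, sub_zero, abs_abs]
      rw [Real.dist_eq] at ha; exact ha
    have h3 := hh h2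
    rw [Real.dist_eq, hω0, sub_zero, abs_of_nonneg (hωnn _ (abs_nonneg _))] at h3
    rw [Real.dist_eq]
    exact lt_of_le_of_lt h1 h3
  -- the mollified coefficient
  set F : ℝ → ℝ := fun x => ∫ y in (0:ℝ)..x, d y with hFdef
  have hF : ∀ x, HasDerivAt F (d x) x := fun x =>
    intervalIntegral.integral_hasDerivAt_right (hd_cont.intervalIntegrable (μ := volume) _ _)
      (hd_cont.stronglyMeasurable.stronglyMeasurableAtFilter) hd_cont.continuousAt
  set ce : ℝ → ℝ := fun t => l * (F (t + 1/l) - F t) with hcedef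
  have hce_int : ∀ t, ce t = l * ∫ x in t..(t+1/l), d x := by
    intro t
    have h := intervalIntegral.integral_interval_sub_left
      (hd_cont.intervalIntegrable (μ := volume) 0 (t+1/l))
      (hd_cont.intervalIntegrable (μ := volume) 0 t)
    simp only [hcedef, hFdef]
    rw [h]
  have hce_deriv : ∀ t, HasDerivAt ce (l * (d (t+1/l) - d t)) t := by
    intro t
    have h1 : HasDerivAt (fun x => F (x + 1/l)) (d (t+1/l)) t := by
      have h := (hF (t+1/l)).comp t ((hasDerivAt_id t).add_const (1/l))
      exact h.congr_deriv (mul_one _)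
    exact (h1.sub (hF t)).const_mul l
  have hab : ∀ t : ℝ, t ≤ t + 1/l := fun t => by
    have : (0:ℝ) < 1/l := by positivity
    linarith
  have hce_bound : ∀ t, μ₁ ≤ ce t ∧ ce t ≤ μ₂ := by
    intro t
    rw [hce_int]
    have i1 : (∫ _x in t..(t+1/l), μ₁) ≤ ∫ x in t..(t+1/l), d x :=
      intervalIntegral.integral_mono_on (hab t) (intervalIntegrable_const (μ := volume))
        (hd_cont.intervalIntegrable (μ := volume) _ _) (fun x _ => (hd_bound x).1)
    have i2 : (∫ x in t..(t+1/l), d x) ≤ ∫ _x in t..(t+1/l), μ₂ :=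
      intervalIntegral.integral_mono_on (hab t) (hd_cont.intervalIntegrable (μ := volume) _ _)
        (intervalIntegrable_const (μ := volume)) (fun x _ => (hd_bound x).2)
    rw [intervalIntegral.integral_const] at i1 i2
    simp only [add_sub_cancel_left, smul_eq_mul] at i1 i2
    constructor
    · have := mul_le_mul_of_nonneg_left i1 hl0.le
      calc μ₁ = l * (1/l * μ₁) := by field_simp
        _ ≤ l * ∫ x in t..(t+1/l), d x := this
    · have := mul_le_mul_of_nonneg_left i2 hl0.le
      calc l * ∫ x in t..(t+1/l), d x ≤ l * (1/l * μ₂) := this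
        _ = μ₂ := by field_simp
  have hce_close : ∀ t ≥ (0:ℝ), |ce t - c t| ≤ ω (1/l) := by
    intro t ht
    have heq : ce t - c t = l * ∫ x in t..(t+1/l), (d x - c t) := by
      rw [intervalIntegral.integral_sub (hd_cont.intervalIntegrable (μ := volume) _ _)
        (intervalIntegrable_const (μ := volume)), intervalIntegral.integral_const, hce_int]
      simp only [add_sub_cancel_left, smul_eq_mul]
      field_simp
    have hbd : ∀ x ∈ Set.uIoc t (t+1/l), ‖d x - c t‖ ≤ ω (1/l) := by
      intro x hx
      rw [Set.uIoc_of_le (hab t)] at hx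
      obtain ⟨hx1, hx2⟩ := hx
      have hx0 : (0:ℝ) ≤ x := le_trans ht hx1.le
      have hdt : d t = c t := hd_eq t ht
      rw [Real.norm_eq_abs, ← hdt]
      refine (hd_lip x t).trans (hω_mono ?_)
      rw [abs_of_nonneg (by linarith : (0:ℝ) ≤ x - t)]
      linarith
    have hint := intervalIntegral.norm_integral_le_of_norm_le_const hbd
    rw [Real.norm_eq_abs] at hint
    have habs : |(t + 1/l) - t| = 1/l := by
      rw [add_sub_cancel_left, abs_of_pos (by positivity)]
    rw [habs] at hint
    calc |ce t - c t| = l * |∫ x in t..(t+1/l), (d x - c t)| := by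
          rw [heq, abs_mul, abs_of_pos hl0]
      _ ≤ l * (ω (1/l) * (1/l)) := mul_le_mul_of_nonneg_left hint hl0.le
      _ = ω (1/l) := by field_simp
  -- the energy
  set E : ℝ → ℝ := fun t =>
    (u' t + δ*s*u t)^2 + δ^2*s^2*(u t)^2 + l^2 * ce t * (u t)^2 with hEdef
  have hE_deriv : ∀ t, HasDerivAt E
      (2*(u' t + δ*s*u t)*(u'' t + δ*s*u' t) + 2*δ^2*s^2*(u t)*(u' t)
        + (l^2*(l*(d (t+1/l) - d t))*(u t)^2 + l^2*ce t*(2*(u t)*(u' t)))) t := by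
    intro t
    have h1 : HasDerivAt (fun t => u' t + δ*s*u t) (u'' t + δ*s*u' t) t :=
      (hu' t).add ((hu t).const_mul (δ*s))
    have h2 : HasDerivAt (fun t => (u' t + δ*s*u t)^2)
        (2*(u' t + δ*s*u t)*(u'' t + δ*s*u' t)) t := by
      have := h1.pow 2
      refine this.congr_deriv ?_; push_cast; ring
    have h3 : HasDerivAt (fun t => (u t)^2) (2*(u t)*(u' t)) t := by
      have := (hu t).pow 2
      refine this.congr_deriv ?_; push_cast; ring
    have h4 : HasDerivAt (fun t => δ^2*s^2*(u t)^2) (2*δ^2*s^2*(u t)*(u' t)) t := by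
      have := h3.const_mul (δ^2*s^2)
      refine this.congr_deriv ?_; ring
    have h5 : HasDerivAt (fun t => l^2 * ce t * (u t)^2)
        (l^2*(l*(d (t+1/l) - d t))*(u t)^2 + l^2*ce t*(2*(u t)*(u' t))) t := by
      have hc5 : HasDerivAt (fun t => l^2 * ce t) (l^2*(l*(d (t+1/l) - d t))) t :=
        (hce_deriv t).const_mul (l^2)
      exact hc5.mul h3
    exact (h2.add h4).add h5
  have hexp : ∀ t : ℝ, HasDerivAt (fun t => Real.exp (2*r*s*t))
      (Real.exp (2*r*s*t) * (2*r*s)) t := by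
    intro t
    have h := ((hasDerivAt_id t).const_mul (2*r*s)).exp
    simpa using h
  set g : ℝ → ℝ := fun t => E t * Real.exp (2*r*s*t) with hgdef
  have hg_deriv : ∀ t, HasDerivAt g
      (((2*(u' t + δ*s*u t)*(u'' t + δ*s*u' t) + 2*δ^2*s^2*(u t)*(u' t)
        + (l^2*(l*(d (t+1/l) - d t))*(u t)^2 + l^2*ce t*(2*(u t)*(u' t))))
        + 2*r*s*E t) * Real.exp (2*r*s*t)) t := by
    intro t
    have h := (hE_deriv t).mul (hexp t)
    refine h.congr_deriv ?_; ring
  -- pointwise differential inequality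
  have hkey : ∀ t > (0:ℝ), (2*(u' t + δ*s*u t)*(u'' t + δ*s*u' t) + 2*δ^2*s^2*(u t)*(u' t)
      + (l^2*(l*(d (t+1/l) - d t))*(u t)^2 + l^2*ce t*(2*(u t)*(u' t))))
      + 2*r*s*E t ≤ 0 := by
    intro t ht
    have ht0 : (0:ℝ) ≤ t := ht.le
    have hsub : u'' t + δ*s*u' t = -(δ*s)*(u' t) - l^2*(c t)*(u t) := by
      have h := hode t ht0
      linarith
    have hp : l * |ce t - c t| ≤ s * W := by
      rw [← hlω]
      exact mul_le_mul_of_nonneg_left (hce_close t ht0) hl0.le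
    have hq : l * |d (t+1/l) - d t| ≤ s * W := by
      rw [← hlω]
      refine mul_le_mul_of_nonneg_left ?_ hl0.le
      have h := hd_lip (t+1/l) t
      rwa [add_sub_cancel_left, abs_of_pos (by positivity : (0:ℝ) < 1/l)] at h
    have hqa := quad_aux δ r s l W μ₁ μ₂ (d (t+1/l) - d t) (c t) (ce t) (u' t) (u t)
      hr0 hrδ hl0 hs0 hsl hW0 hp hq (hc_bound t ht0).1 (hce_bound t).2 hmain
    rw [hEdef, hsub]
    simp only []
    linarith [hqa]
  -- Gronwall via antitonicity
  have hg_anti : AntitoneOn g (Set.Ici (0:ℝ)) := by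
    apply antitoneOn_of_deriv_nonpos (convex_Ici 0)
    · exact fun x _ => ((hg_deriv x).differentiableAt).continuousAt.continuousWithinAt
    · intro x hx
      exact ((hg_deriv x).differentiableAt).differentiableWithinAt
    · intro x hx
      rw [interior_Ici] at hx
      rw [(hg_deriv x).deriv]
      exact mul_nonpos_of_nonpos_of_nonneg (hkey x hx) (Real.exp_nonneg _)
  intro t ht
  have hgt : g t ≤ g 0 := hg_anti (Set.self_mem_Ici) ht ht
  have hg0 : g 0 = E 0 := by simp [hgdef]
  have hEt : E t * Real.exp (2*r*s*t) ≤ E 0 := by rw [← hg0]; exact hgt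
  have hexp_pos : (0:ℝ) < Real.exp (-(2*r*s)*t) := Real.exp_pos _
  have hEt' : E t ≤ E 0 * Real.exp (-(2*r*s)*t) := by
    have h := mul_le_mul_of_nonneg_right hEt hexp_pos.le
    rw [mul_assoc, ← Real.exp_add] at h
    simpa [show 2*r*s*t + -(2*r*s)*t = 0 by ring] using h
  -- lower bound for the energy
  have hlow : (u' t)^2 + 2*l^2*μ₁*(u t)^2 ≤ 2 * E t := by
    have hsq : (0:ℝ) ≤ (u' t + 2*δ*s*u t)^2 := sq_nonneg _
    have hmu : (0:ℝ) ≤ 2*l^2*((ce t - μ₁)*(u t)^2) :=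
      mul_nonneg (by positivity)
        (mul_nonneg (sub_nonneg.mpr (hce_bound t).1) (sq_nonneg _))
    rw [hEdef]
    simp only []
    nlinarith [hsq, hmu]
  -- upper bound for the initial energy
  have hup : 2 * E 0 ≤ 4*u₁^2 + 2*(3*δ^2*s^2 + l^2*μ₂)*u₀^2 := by
    have hsq : (0:ℝ) ≤ (u₁ - δ*s*u₀)^2 := sq_nonneg _
    have hmu : (0:ℝ) ≤ 2*l^2*((μ₂ - ce 0)*u₀^2) :=
      mul_nonneg (by positivity)
        (mul_nonneg (sub_nonneg.mpr (hce_bound 0).2) (sq_nonneg _))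
    rw [hEdef]
    simp only [h0, h1]
    nlinarith [hsq, hmu]
  -- assemble
  rw [hs4]
  have hfinal : (u' t)^2 + 2*l^2*μ₁*(u t)^2
      ≤ (4*u₁^2 + 2*(3*δ^2*s^2 + l^2*μ₂)*u₀^2) * Real.exp (-(2*r*s)*t) := by
    calc (u' t)^2 + 2*l^2*μ₁*(u t)^2 ≤ 2 * E t := hlow
      _ ≤ 2 * (E 0 * Real.exp (-(2*r*s)*t)) := by linarith
      _ = (2 * E 0) * Real.exp (-(2*r*s)*t) := by ring
      _ ≤ (4*u₁^2 + 2*(3*δ^2*s^2 + l^2*μ₂)*u₀^2) * Real.exp (-(2*r*s)*t) :=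
          mul_le_mul_of_nonneg_right hup hexp_pos.le
  linarith [hfinal]
end

section
/- Fix δ > 0, σ ≥ 0, ε > 0, λ > 0. Define b(t) := (2ελ − δλ^{2σ})t − ε sin(2λt), w(t) := sin(λt) e^{b(t)}, and γ(t) := 1 + δ²/λ^{2−4σ} − 16ε² sin⁴(λt) − 8ε sin(2λt). Then w''(t) + 2δλ^{2σ} w'(t) + λ² γ(t) w(t) = 0 for all t ∈ ℝ. -/
open Real

theorem stmt12 (δ σ ε l : ℝ) (hδ : 0 < δ) (hσ : 0 ≤ σ) (hε : 0 < ε) (hl : 0 < l)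
    (b w γ : ℝ → ℝ)
    (hb : ∀ t, b t = (2 * ε * l - δ * l ^ (2*σ)) * t - ε * Real.sin (2 * l * t))
    (hw : ∀ t, w t = Real.sin (l * t) * Real.exp (b t))
    (hγ : ∀ t, γ t = 1 + δ ^ 2 / l ^ (2 - 4*σ)
      - 16 * ε ^ 2 * (Real.sin (l * t)) ^ 4 - 8 * ε * Real.sin (2 * l * t)) :
    ∀ t : ℝ,
      deriv (deriv w) t + 2 * δ * l ^ (2*σ) * deriv w t + l ^ 2 * γ t * w t = 0 := by
  set D : ℝ := δ * l ^ (2*σ) with hD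
  set A : ℝ := 2 * ε * l - D with hA
  have hbf : b = fun t => A * t - ε * Real.sin (2 * l * t) := funext hb
  have hwf : w = fun t => Real.sin (l * t) * Real.exp (b t) := funext hw
  -- derivative of b
  have hbd : ∀ t : ℝ, HasDerivAt b (A - 2 * ε * l * Real.cos (2 * l * t)) t := by
    intro t
    rw [hbf]
    have h1 : HasDerivAt (fun t : ℝ => A * t) A t := by
      simpa using (hasDerivAt_id t).const_mul A
    have h0 : HasDerivAt (fun t : ℝ => 2 * l * t) (2 * l) t := by
      simpa using (hasDerivAt_id t).const_mul (2 * l)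
    have h2 : HasDerivAt (fun t : ℝ => Real.sin (2 * l * t))
        (Real.cos (2 * l * t) * (2 * l)) t :=
      (Real.hasDerivAt_sin (2 * l * t)).comp t h0
    have := h1.sub (h2.const_mul ε)
    refine this.congr_deriv ?_
    ring
  have hsin : ∀ t : ℝ, HasDerivAt (fun t : ℝ => Real.sin (l * t))
      (Real.cos (l * t) * l) t := by
    intro t
    exact (Real.hasDerivAt_sin (l * t)).comp t (by simpa using (hasDerivAt_id t).const_mul l)
  have hcos : ∀ t : ℝ, HasDerivAt (fun t : ℝ => Real.cos (l * t))
      (-Real.sin (l * t) * l) t := by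
    intro t
    exact (Real.hasDerivAt_cos (l * t)).comp t (by simpa using (hasDerivAt_id t).const_mul l)
  have hcos2 : ∀ t : ℝ, HasDerivAt (fun t : ℝ => Real.cos (2 * l * t))
      (-Real.sin (2 * l * t) * (2 * l)) t := by
    intro t
    exact (Real.hasDerivAt_cos (2 * l * t)).comp t
      (by simpa using (hasDerivAt_id t).const_mul (2 * l))
  have hexp : ∀ t : ℝ, HasDerivAt (fun t : ℝ => Real.exp (b t))
      (Real.exp (b t) * (A - 2 * ε * l * Real.cos (2 * l * t))) t := by
    intro t
    exact (hbd t).exp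
  -- first derivative of w
  have hwd : ∀ t : ℝ, HasDerivAt w
      ((l * Real.cos (l * t) + (A - 2 * ε * l * Real.cos (2 * l * t)) * Real.sin (l * t))
        * Real.exp (b t)) t := by
    intro t
    rw [hwf]
    have := (hsin t).mul (hexp t)
    refine this.congr_deriv ?_
    ring
  have hderiv1 : deriv w = fun t =>
      (l * Real.cos (l * t) + (A - 2 * ε * l * Real.cos (2 * l * t)) * Real.sin (l * t))
        * Real.exp (b t) := funext fun t => (hwd t).deriv
  -- second derivative
  have hw2 : ∀ t : ℝ, HasDerivAt (deriv w)
      (((l * (-Real.sin (l * t) * l)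
          + (2 * ε * l * (Real.sin (2 * l * t) * (2 * l))) * Real.sin (l * t)
          + (A - 2 * ε * l * Real.cos (2 * l * t)) * (Real.cos (l * t) * l))
        + (l * Real.cos (l * t) + (A - 2 * ε * l * Real.cos (2 * l * t)) * Real.sin (l * t))
            * (A - 2 * ε * l * Real.cos (2 * l * t))) * Real.exp (b t)) t := by
    intro t
    rw [hderiv1]
    have hinner : HasDerivAt (fun t : ℝ =>
        l * Real.cos (l * t) + (A - 2 * ε * l * Real.cos (2 * l * t)) * Real.sin (l * t))
        (l * (-Real.sin (l * t) * l)
          + (2 * ε * l * (Real.sin (2 * l * t) * (2 * l))) * Real.sin (l * t)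
          + (A - 2 * ε * l * Real.cos (2 * l * t)) * (Real.cos (l * t) * l)) t := by
      have h1 := (hcos t).const_mul l
      have h2 : HasDerivAt (fun t : ℝ => A - 2 * ε * l * Real.cos (2 * l * t))
          (2 * ε * l * (Real.sin (2 * l * t) * (2 * l))) t := by
        have := (hasDerivAt_const t A).sub ((hcos2 t).const_mul (2 * ε * l))
        refine this.congr_deriv ?_
        ring
      have := h1.add (h2.mul (hsin t))
      refine this.congr_deriv ?_
      ring
    have := hinner.mul (hexp t)
    refine this.congr_deriv ?_
    ring
  intro t
  rw [(hw2 t).deriv, hderiv1]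
  rw [hγ t, hw t]
  -- trig identities
  have hs2 : Real.sin (2 * l * t) = 2 * Real.sin (l * t) * Real.cos (l * t) := by
    rw [show (2 : ℝ) * l * t = 2 * (l * t) by ring, Real.sin_two_mul]
  have hc2 : Real.cos (2 * l * t) = 1 - 2 * Real.sin (l * t) ^ 2 := by
    rw [show (2 : ℝ) * l * t = 2 * (l * t) by ring, Real.cos_two_mul]
    have := Real.sin_sq_add_cos_sq (l * t)
    nlinarith [this]
  -- power identity : l^2 * (δ^2 / l^(2-4σ)) = D^2
  have hpow : l ^ 2 * (δ ^ 2 / l ^ (2 - 4*σ)) = D ^ 2 := by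
    have h1 : (l : ℝ) ^ (2 : ℕ) = l ^ ((2 : ℝ)) := by
      rw [← Real.rpow_natCast l 2]; norm_num
    have h2 : (l ^ (2*σ)) ^ (2:ℕ) = l ^ (4 * σ) := by
      rw [← Real.rpow_natCast (l ^ (2*σ)) 2, ← Real.rpow_mul hl.le]
      norm_num; ring_nf
    have h3 : l ^ (2 - 4*σ) * l ^ (4*σ) = l ^ ((2:ℝ)) := by
      rw [← Real.rpow_add hl]; ring_nf
    have h4 : l ^ (2 - 4*σ) ≠ 0 := (Real.rpow_pos_of_pos hl _).ne'
    rw [hD]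
    field_simp
    rw [h2, h3, h1]
  beta_reduce
  rw [hs2, hc2]
  linear_combination (Real.sin (l * t) * Real.exp (b t)) * hpow
end
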